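/- arXiv:0810.4627 — 4 statements merged into one kernel-verified Lean document; each statement's English description precedes it below -/
import Mathlib

section
/- Let φ : X → Y be an open code between shift spaces. If φ is constant-to-one, then φ is bi-closing. -/
open Set Function Filter

variable {A : Type*} {B : Type*} {C : Type*}

/-- The shift map on the full shift. -/
def shiftMap (x : ℤ → A) : ℤ → A := fun i => x (i + 1)

/-- A shift space (subshift): a closed shift-invariant subset of the full shift. -/
def IsSubshift [TopologicalSpace A] (X : Set (ℤ → A)) : Prop :=
  IsClosed X ∧ shiftMap '' X = X

/-- The word `w` occurs in `x` at position `k`. -/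
def OccursAt (x : ℤ → A) (k : ℤ) (w : List A) : Prop :=
  ∀ i : Fin w.length, x (k + ((i : ℕ) : ℤ)) = w.get i

/-- The word `w` belongs to the language of `X`. -/
def WordIn (X : Set (ℤ → A)) (w : List A) : Prop :=
  ∃ x ∈ X, ∃ k : ℤ, OccursAt x k w

/-- Irreducibility of a shift space. -/
def IrreducibleSubshift (X : Set (ℤ → A)) : Prop :=
  ∀ u v : List A, WordIn X u → WordIn X v → ∃ w : List A, WordIn X (u ++ w ++ v)

/-- Nonwandering shift space. -/
def NonwanderingSubshift (X : Set (ℤ → A)) : Prop :=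
  ∀ u : List A, WordIn X u → ∃ w : List A, WordIn X (u ++ w ++ u)

/-- A shift of finite type: defined by a finite set of forbidden words. -/
def IsSFT (X : Set (ℤ → A)) : Prop :=
  ∃ F : Finset (List A), X = {x : ℤ → A | ∀ w ∈ F, ∀ k : ℤ, ¬ OccursAt x k w}

/-- A (sliding block) code: a continuous shift-commuting map between shift spaces. -/
def IsCode [TopologicalSpace A] [TopologicalSpace B]
    {X : Set (ℤ → A)} {Y : Set (ℤ → B)} (φ : X → Y) : Prop :=
  Continuous φ ∧
    ∀ (x : X) (hx : shiftMap (x : ℤ → A) ∈ X),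
      ((φ ⟨shiftMap (x : ℤ → A), hx⟩ : Y) : ℤ → B) = shiftMap ((φ x : Y) : ℤ → B)

/-- A sofic shift: a factor of a shift of finite type. -/
def IsSofic [TopologicalSpace A] (Y : Set (ℤ → A)) : Prop :=
  ∃ (n : ℕ) (Z : Set (ℤ → Fin n)), IsSubshift Z ∧ IsSFT Z ∧
    ∃ ψ : Z → Y, IsCode ψ ∧ Function.Surjective ψ

/-- Two points are left asymptotic if they agree on all sufficiently negative coordinates. -/
def LeftAsymptotic (x y : ℤ → A) : Prop := ∃ N : ℤ, ∀ i ≤ N, x i = y i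

/-- Two points are right asymptotic if they agree on all sufficiently positive coordinates. -/
def RightAsymptotic (x y : ℤ → A) : Prop := ∃ N : ℤ, ∀ i, N ≤ i → x i = y i

/-- A code is right closing if it never collapses two distinct left asymptotic points. -/
def RightClosing {X : Set (ℤ → A)} {Y : Set (ℤ → B)} (φ : X → Y) : Prop :=
  ∀ x x' : X, LeftAsymptotic (x : ℤ → A) (x' : ℤ → A) → φ x = φ x' → x = x'

/-- A code is left closing if it never collapses two distinct right asymptotic points. -/
def LeftClosing {X : Set (ℤ → A)} {Y : Set (ℤ → B)} (φ : X → Y) : Prop :=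
  ∀ x x' : X, RightAsymptotic (x : ℤ → A) (x' : ℤ → A) → φ x = φ x' → x = x'

/-- Bi-closing: both right and left closing. -/
def BiClosing {X : Set (ℤ → A)} {Y : Set (ℤ → B)} (φ : X → Y) : Prop :=
  RightClosing φ ∧ LeftClosing φ

/-- Finite-to-one map. -/
def FiniteToOne {α β : Type*} (φ : α → β) : Prop := ∀ y : β, (φ ⁻¹' {y}).Finite

/-- Every fiber has exactly `d` elements. -/
def ExactlyDToOne {α β : Type*} (φ : α → β) (d : ℕ) : Prop :=
  ∀ y : β, (φ ⁻¹' {y}).Finite ∧ Nat.card (φ ⁻¹' {y}) = d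

/-- Constant-to-one map. -/
def ConstantToOne {α β : Type*} (φ : α → β) : Prop := ∃ d : ℕ, ExactlyDToOne φ d

/-- A doubly transitive point: every word of `Y` occurs infinitely often to the left
and to the right. -/
def DoublyTransitive (Y : Set (ℤ → A)) (y : ℤ → A) : Prop :=
  ∀ w : List A, WordIn Y w → ∀ N : ℤ,
    (∃ k ≥ N, OccursAt y k w) ∧ (∃ k ≤ N, OccursAt y k w)

/-- The maximal nonwandering subshift of `X`. -/
def OmegaSet [TopologicalSpace A] (X : Set (ℤ → A)) : Set (ℤ → A) :=
  ⋃₀ {Z : Set (ℤ → A) | Z ⊆ X ∧ IsSubshift Z ∧ NonwanderingSubshift Z}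

/-- Topological entropy of a subshift, via the growth rate of the number of words. -/
noncomputable def subshiftEntropy (X : Set (ℤ → A)) : ℝ :=
  Filter.limsup
    (fun n : ℕ => Real.log (Nat.card {w : List A | w.length = n ∧ WordIn X w}) / n)
    Filter.atTop

/-- An irreducible component of `X`: a maximal nonempty irreducible subshift of `X`. -/
def IsIrreducibleComponent [TopologicalSpace A] (X X₀ : Set (ℤ → A)) : Prop :=
  X₀ ⊆ X ∧ IsSubshift X₀ ∧ X₀.Nonempty ∧ IrreducibleSubshift X₀ ∧
    ∀ Z : Set (ℤ → A), Z ⊆ X → IsSubshift Z → IrreducibleSubshift Z → X₀ ⊆ Z → Z = X₀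

-- The metric on a shift space: `d(x,y) = 2^{-k}` where `k` is maximal with
-- `x` and `y` agreeing on `[-k,k]`, and `0` if `x = y`.
open Classical in
noncomputable def shiftDist (x y : ℤ → A) : ℝ :=
  if x = y then 0
  else (2 : ℝ) ^ (-((sSup {n : ℕ | ∀ i : ℤ, |i| ≤ (n : ℤ) → x i = y i} : ℕ) : ℤ))


def fullShiftEquiv {α : Type*} : (ℤ → α) ≃ (ℤ → α) where
  toFun := shiftMap
  invFun x := fun i => x (i - 1)
  left_inv x := by funext i; simp [shiftMap]
  right_inv x := by funext i; simp [shiftMap]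

noncomputable def subShiftEquiv {α : Type*} [TopologicalSpace α] {X : Set (ℤ → α)}
    (hX : IsSubshift X) : ↥X ≃ ↥X :=
  (Equiv.Set.image shiftMap X fullShiftEquiv.injective).trans (Equiv.setCongr hX.2)

lemma subShiftEquiv_coe {α : Type*} [TopologicalSpace α] {X : Set (ℤ → α)}
    (hX : IsSubshift X) (x : ↥X) :
    ((subShiftEquiv hX x : ↥X) : ℤ → α) = shiftMap (x : ℤ → α) := rfl

lemma subShiftEquiv_inv_coe {α : Type*} [TopologicalSpace α] {X : Set (ℤ → α)}
    (hX : IsSubshift X) (x : ↥X) (i : ℤ) :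
    (((subShiftEquiv hX).symm x : ↥X) : ℤ → α) i = (x : ℤ → α) (i - 1) := by
  have h := congrArg (fun q : ↥X => (q : ℤ → α) (i - 1)) ((subShiftEquiv hX).apply_symm_apply x)
  simp only [subShiftEquiv_coe, shiftMap] at h
  rw [show i - 1 + 1 = i by ring] at h
  exact h

lemma subShiftEquiv_zpow_coe {α : Type*} [TopologicalSpace α] {X : Set (ℤ → α)}
    (hX : IsSubshift X) (n : ℤ) (x : ↥X) (i : ℤ) :
    (((subShiftEquiv hX ^ n) x : ↥X) : ℤ → α) i = (x : ℤ → α) (i + n) := by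
  induction n using Int.induction_on generalizing x i with
  | zero => simp
  | succ k ih =>
      rw [zpow_add_one]
      have : ((subShiftEquiv hX ^ (k:ℤ) * subShiftEquiv hX) x) =
          (subShiftEquiv hX ^ (k:ℤ)) (subShiftEquiv hX x) := rfl
      rw [this, ih]
      rw [subShiftEquiv_coe]
      simp [shiftMap]; ring_nf
  | pred k ih =>
      rw [zpow_sub_one]
      have : ((subShiftEquiv hX ^ (-k:ℤ) * (subShiftEquiv hX)⁻¹) x) =
          (subShiftEquiv hX ^ (-k:ℤ)) ((subShiftEquiv hX)⁻¹ x) := rfl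
      rw [this, ih]
      have : ((subShiftEquiv hX)⁻¹ : ↥X ≃ ↥X) = (subShiftEquiv hX).symm := rfl
      rw [this, subShiftEquiv_inv_coe]
      ring_nf

section AuxShift
variable [TopologicalSpace A] [TopologicalSpace B]
    {X : Set (ℤ → A)} {Y : Set (ℤ → B)}

lemma code_shift (hX : IsSubshift X) (hY : IsSubshift Y) (φ : X → Y) (hφ : IsCode φ)
    (x : ↥X) : φ (subShiftEquiv hX x) = subShiftEquiv hY (φ x) := by
  have hx : shiftMap (x : ℤ → A) ∈ X := by
    have h : shiftMap (x : ℤ → A) ∈ shiftMap '' X := mem_image_of_mem _ x.2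
    rwa [hX.2] at h
  have hx2 : subShiftEquiv hX x = ⟨shiftMap (x : ℤ → A), hx⟩ :=
    Subtype.ext (subShiftEquiv_coe hX x)
  apply Subtype.ext
  calc ((φ (subShiftEquiv hX x) : ↥Y) : ℤ → B)
      = ((φ ⟨shiftMap (x : ℤ → A), hx⟩ : ↥Y) : ℤ → B) :=
        congrArg (fun q => ((φ q : ↥Y) : ℤ → B)) hx2
    _ = shiftMap ((φ x : ↥Y) : ℤ → B) := hφ.2 x hx
    _ = ((subShiftEquiv hY (φ x) : ↥Y) : ℤ → B) := (subShiftEquiv_coe hY (φ x)).symm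

lemma code_shift_zpow (hX : IsSubshift X) (hY : IsSubshift Y) (φ : X → Y) (hφ : IsCode φ)
    (n : ℤ) (x : ↥X) : φ ((subShiftEquiv hX ^ n) x) = (subShiftEquiv hY ^ n) (φ x) := by
  have hinv : ∀ x : ↥X, φ ((subShiftEquiv hX)⁻¹ x) = (subShiftEquiv hY)⁻¹ (φ x) := by
    intro x
    apply (subShiftEquiv hY).injective
    have : subShiftEquiv hY ((subShiftEquiv hY)⁻¹ (φ x)) = φ x :=
      (subShiftEquiv hY).apply_symm_apply (φ x)
    rw [this, ← code_shift hX hY φ hφ]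
    congr 1
    exact (subShiftEquiv hX).apply_symm_apply x
  induction n using Int.induction_on generalizing x with
  | zero => simp
  | succ k ih =>
      rw [zpow_add_one, zpow_add_one]
      have h1 : ((subShiftEquiv hX ^ (k:ℤ) * subShiftEquiv hX) x) =
          (subShiftEquiv hX ^ (k:ℤ)) (subShiftEquiv hX x) := rfl
      have h2 : ∀ y : ↥Y, ((subShiftEquiv hY ^ (k:ℤ) * subShiftEquiv hY) y) =
          (subShiftEquiv hY ^ (k:ℤ)) (subShiftEquiv hY y) := fun _ => rfl
      rw [h1, h2, ih, code_shift hX hY φ hφ]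
  | pred k ih =>
      rw [zpow_sub_one, zpow_sub_one]
      have h1 : ((subShiftEquiv hX ^ (-k:ℤ) * (subShiftEquiv hX)⁻¹) x) =
          (subShiftEquiv hX ^ (-k:ℤ)) ((subShiftEquiv hX)⁻¹ x) := rfl
      have h2 : ∀ y : ↥Y, ((subShiftEquiv hY ^ (-k:ℤ) * (subShiftEquiv hY)⁻¹) y) =
          (subShiftEquiv hY ^ (-k:ℤ)) ((subShiftEquiv hY)⁻¹ y) := fun _ => rfl
      rw [h1, h2, ih, hinv]

lemma sep_lemma [Finite A] [DiscreteTopology A] [DiscreteTopology B]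
    (hX : IsSubshift X) (φ : ↥X → ↥Y) (hφ : IsCode φ) (hopen : IsOpenMap φ)
    (hcto : ConstantToOne φ) (x x' : ℕ → ↥X) (hfib : ∀ k, φ (x k) = φ (x' k))
    (hne : ∀ k, x k ≠ x' k)
    (hagree : ∀ (k : ℕ) (i : ℤ), i.natAbs ≤ k → (x k : ℤ → A) i = (x' k : ℤ → A) i) :
    False := by
  classical
  obtain ⟨d, hd⟩ := hcto
  haveI : CompactSpace ↥X := isCompact_iff_compactSpace.mp hX.1.isCompact
  obtain ⟨𝒰, h𝒰⟩ : ∃ 𝒰 : Ultrafilter ℕ, ↑𝒰 ≤ (atTop : Filter ℕ) := Ultrafilter.exists_le _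
  obtain ⟨z, -, hz⟩ := isCompact_univ.ultrafilter_le_nhds (𝒰.map x)
    (by simp)
  have hz : Tendsto x 𝒰 (nhds z) := hz
  -- pointwise eventual equality
  have hxz : ∀ i : ℤ, ∀ᶠ k in (𝒰 : Filter ℕ), (x k : ℤ → A) i = (z : ℤ → A) i := by
    intro i
    have hc : Continuous fun q : ↥X => (q : ℤ → A) i :=
      (continuous_apply i).comp continuous_subtype_val
    have := (hc.tendsto z).comp hz
    rw [nhds_discrete, tendsto_pure] at this
    exact this
  have hx'z : ∀ i : ℤ, ∀ᶠ k in (𝒰 : Filter ℕ), (x' k : ℤ → A) i = (z : ℤ → A) i := by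
    intro i
    have h1 : ∀ᶠ k in (𝒰 : Filter ℕ), i.natAbs ≤ k := h𝒰 (eventually_ge_atTop i.natAbs)
    filter_upwards [hxz i, h1] with k h2 h3
    rw [← hagree k i h3]; exact h2
  -- y tends to φ z
  have hy : Tendsto (fun k => φ (x k)) 𝒰 (nhds (φ z)) := ((hφ.1.tendsto z).comp hz)
  -- the fiber over φ z
  set F : Set ↥X := φ ⁻¹' {φ z} with hF
  have hFfin : F.Finite := (hd (φ z)).1
  have hzF : z ∈ F := by simp [hF]
  -- separation window
  have hsep : ∃ M : ℕ, ∀ p ∈ F, ∀ p' ∈ F, p ≠ p' →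
      ∃ i : ℤ, i.natAbs ≤ M ∧ (p : ℤ → A) i ≠ (p' : ℤ → A) i := by
    have key : ∀ pq : ↥X × ↥X, pq.1 ≠ pq.2 →
        ∃ i : ℤ, (pq.1 : ℤ → A) i ≠ (pq.2 : ℤ → A) i := by
      rintro ⟨p, p'⟩ hne
      by_contra h
      push_neg at h
      exact hne (Subtype.ext (funext h))
    choose! w hw using key
    refine ⟨(hFfin.prod hFfin).toFinset.sup fun pq => (w pq).natAbs, ?_⟩
    intro p hp p' hp' hpp
    refine ⟨w (p, p'), ?_, hw (p, p') hpp⟩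
    exact Finset.le_sup (f := fun pq => (w pq).natAbs)
      (by simp [Set.Finite.mem_toFinset, Set.mem_prod, hp, hp'])
  obtain ⟨M, hM⟩ := hsep
  -- cylinder neighborhoods
  set U : ↥X → Set ↥X := fun p =>
    {q : ↥X | ∀ i : ℤ, i.natAbs ≤ M → (q : ℤ → A) i = (p : ℤ → A) i} with hU
  have hwin : ({i : ℤ | i.natAbs ≤ M}).Finite := by
    apply (Set.finite_Icc (-(M : ℤ)) M).subset
    intro i hi
    simp only [Set.mem_setOf_eq] at hi
    simp only [Set.mem_Icc]
    omega
  have hUopen : ∀ p, IsOpen (U p) := by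
    intro p
    have : U p = ⋂ i ∈ {i : ℤ | i.natAbs ≤ M},
        (fun q : ↥X => (q : ℤ → A) i) ⁻¹' {(p : ℤ → A) i} := by
      ext q; simp [hU]
    rw [this]
    exact hwin.isOpen_biInter fun i _ =>
      (isOpen_discrete _).preimage ((continuous_apply i).comp continuous_subtype_val)
  have hUdisj : ∀ p ∈ F, ∀ p' ∈ F, (U p ∩ U p').Nonempty → p = p' := by
    intro p hp p' hp' ⟨q, hq, hq'⟩
    by_contra hpp
    obtain ⟨i, hi, hnei⟩ := hM p hp p' hp' hpp
    exact hnei ((hq i hi).symm.trans (hq' i hi))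
  -- eventually conditions
  have ev1 : ∀ᶠ k in (𝒰 : Filter ℕ), ∀ p ∈ hFfin.toFinset, φ (x k) ∈ φ '' (U p) := by
    rw [eventually_all_finset]
    intro p hp
    rw [Set.Finite.mem_toFinset] at hp
    have hpo : IsOpen (φ '' (U p)) := hopen _ (hUopen p)
    have hmem : φ z ∈ φ '' (U p) := by
      have : p ∈ U p := fun i _ => rfl
      have := mem_image_of_mem φ this
      rwa [show φ p = φ z from hp] at this
    exact hy.eventually (hpo.mem_nhds hmem)
  have ev2 : ∀ᶠ k in (𝒰 : Filter ℕ), x k ∈ U z := by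
    have : ∀ᶠ k in (𝒰 : Filter ℕ), ∀ i ∈ hwin.toFinset, (x k : ℤ → A) i = (z : ℤ → A) i := by
      rw [eventually_all_finset]
      intro i _
      exact hxz i
    filter_upwards [this] with k hk i hi
    exact hk i (by simpa [Set.Finite.mem_toFinset] using hi)
  have ev3 : ∀ᶠ k in (𝒰 : Filter ℕ), x' k ∈ U z := by
    have : ∀ᶠ k in (𝒰 : Filter ℕ), ∀ i ∈ hwin.toFinset, (x' k : ℤ → A) i = (z : ℤ → A) i := by
      rw [eventually_all_finset]
      intro i _
      exact hx'z i
    filter_upwards [this] with k hk i hi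
    exact hk i (by simpa [Set.Finite.mem_toFinset] using hi)
  obtain ⟨k, h1, h2, h3⟩ := (ev1.and (ev2.and ev3)).exists
  -- pick preimages in each cylinder
  have hpre : ∀ p, p ∈ F → ∃ q, q ∈ U p ∧ φ q = φ (x k) := by
    intro p hp
    have := h1 p (by rwa [Set.Finite.mem_toFinset])
    obtain ⟨q, hq1, hq2⟩ := this
    exact ⟨q, hq1, hq2⟩
  choose! g hg1 hg2 using hpre
  -- counting
  set Fk : Set ↥X := φ ⁻¹' {φ (x k)} with hFk
  have hFkfin : Fk.Finite := (hd (φ (x k))).1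
  have hinj : Set.InjOn g F := by
    intro p hp p' hp' hgg
    apply hUdisj p hp p' hp'
    exact ⟨g p, hg1 p hp, hgg ▸ hg1 p' hp'⟩
  have hsub : g '' F ⊆ Fk := by
    rintro q ⟨p, hp, rfl⟩
    simpa [hFk] using hg2 p hp
  have hcard : Fk.ncard ≤ (g '' F).ncard := by
    rw [Set.ncard_image_of_injOn hinj]
    have e1 : F.ncard = d := by rw [← Nat.card_coe_set_eq]; exact (hd (φ z)).2
    have e2 : Fk.ncard = d := by rw [← Nat.card_coe_set_eq]; exact (hd (φ (x k))).2
    rw [e1, e2]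
  have heq : g '' F = Fk := Set.eq_of_subset_of_ncard_le hsub hcard hFkfin
  -- x k and x' k are both g z
  have hxk : x k ∈ Fk := by simp [hFk]
  have hx'k : x' k ∈ Fk := by simp [hFk, (hfib k).symm]
  have key : ∀ q : ↥X, q ∈ Fk → q ∈ U z → q = g z := by
    intro q hq hqU
    rw [← heq] at hq
    obtain ⟨p, hp, rfl⟩ := hq
    have : p = z := hUdisj p hp z hzF ⟨g p, hg1 p hp, hqU⟩
    rw [this]
  exact hne k ((key _ hxk h2).trans (key _ hx'k h3).symm)

end AuxShift

theorem open_constant_to_one_is_biclosing {A : Type*} {B : Type*} [Finite A] [TopologicalSpace A] [DiscreteTopology A]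
    [Finite B] [TopologicalSpace B] [DiscreteTopology B]
    {X : Set (ℤ → A)} {Y : Set (ℤ → B)} (hX : IsSubshift X) (hY : IsSubshift Y)
    (φ : X → Y) (hφ : IsCode φ)
    (hopen : IsOpenMap φ) (hcto : ConstantToOne φ) :
    BiClosing φ := by
  constructor
  · intro x x' ⟨N, hN⟩ him
    by_contra hne
    refine sep_lemma hX φ hφ hopen hcto
      (fun k => (subShiftEquiv hX ^ (N - k)) x)
      (fun k => (subShiftEquiv hX ^ (N - k)) x') ?_ ?_ ?_
    · intro k
      rw [code_shift_zpow hX hY φ hφ, code_shift_zpow hX hY φ hφ, him]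
    · intro k h
      exact hne ((subShiftEquiv hX ^ (N - k : ℤ)).injective h)
    · intro k i hi
      rw [subShiftEquiv_zpow_coe, subShiftEquiv_zpow_coe]
      exact hN _ (by omega)
  · intro x x' ⟨N, hN⟩ him
    by_contra hne
    refine sep_lemma hX φ hφ hopen hcto
      (fun k => (subShiftEquiv hX ^ (N + k)) x)
      (fun k => (subShiftEquiv hX ^ (N + k)) x') ?_ ?_ ?_
    · intro k
      rw [code_shift_zpow hX hY φ hφ, code_shift_zpow hX hY φ hφ, him]
    · intro k h
      exact hne ((subShiftEquiv hX ^ (N + k : ℤ)).injective h)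
    · intro k i hi
      rw [subShiftEquiv_zpow_coe, subShiftEquiv_zpow_coe]
      exact hN _ (by omega)
end

section
/- Let φ : Σ → Y be a right closing open code from a shift space Σ to an irreducible shift of finite type Y. Then Σ is a nonwandering shift of finite type. -/
open Set Function Filter

variable {A : Type*} {B : Type*} {C : Type*}

namespace RCOAux

open Set

variable {A : Type*} {B : Type*}

/-- The two-sided shift by `t`. -/
def σt (t : ℤ) (x : ℤ → A) : ℤ → A := fun i => x (i + t)

lemma σt_σt (a b : ℤ) (x : ℤ → A) : σt a (σt b x) = σt (b + a) x :=
  funext fun i => congrArg x (by ring)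

lemma σt_zero (x : ℤ → A) : σt 0 x = x := funext fun i => congrArg x (by ring)

lemma σt_succ (t : ℤ) (x : ℤ → A) : σt (t + 1) x = shiftMap (σt t x) :=
  funext fun i => congrArg x (by ring)

lemma shiftMap_eq_σt (x : ℤ → A) : shiftMap x = σt 1 x := rfl

lemma σt_apply (t : ℤ) (x : ℤ → A) (i : ℤ) : σt t x i = x (i + t) := rfl

section Topo
variable [TopologicalSpace A]

lemma mem_σt {X : Set (ℤ → A)} (hX : IsSubshift X) (t : ℤ) {x : ℤ → A} (hx : x ∈ X) :
    σt t x ∈ X := by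
  induction t using Int.induction_on with
  | zero => rwa [σt_zero]
  | succ n ih =>
      rw [σt_succ]
      rw [← hX.2]
      exact ⟨_, ih, rfl⟩
  | pred n ih =>
      have h := ih
      rw [← hX.2] at h
      obtain ⟨z, hz, hzz⟩ := h
      have : z = σt (-(n : ℤ) - 1) x := by
        funext i
        have h1 : z i = shiftMap z (i - 1) := congrArg z (by ring)
        rw [h1, hzz]
        exact congrArg x (by ring)
      rw [this] at hz
      exact hz

end Topo

/-! ### Words and occurrences -/

/-- The word read off `x` on the window `[s, s+len)`. -/
def seg (x : ℤ → A) (s : ℤ) (len : ℕ) : List A := List.ofFn (fun i : Fin len => x (s + i))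

@[simp] lemma length_seg (x : ℤ → A) (s : ℤ) (len : ℕ) : (seg x s len).length = len :=
  List.length_ofFn

lemma occursAt_iff {z : ℤ → A} {k : ℤ} {w : List A} :
    OccursAt z k w ↔ ∀ m : ℕ, (hm : m < w.length) → z (k + m) = w[m] := by
  constructor
  · intro h m hm; simpa using h ⟨m, hm⟩
  · intro h i; simpa using h i i.2

lemma occursAt_seg {z x : ℤ → A} {k s : ℤ} {len : ℕ} :
    OccursAt z k (seg x s len) ↔ ∀ m : ℕ, m < len → z (k + m) = x (s + m) := by
  rw [occursAt_iff]
  constructor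
  · intro h m hm
    have hm' : m < (seg x s len).length := by simpa using hm
    have := h m hm'
    rwa [show (seg x s len)[m] = x (s + m) by simp [seg]] at this
  · intro h m hm
    rw [show (seg x s len)[m] = x (s + m) by simp [seg]]
    exact h m (by simpa using hm)

lemma occursAt_seg_self (x : ℤ → A) (s : ℤ) (len : ℕ) : OccursAt x s (seg x s len) :=
  occursAt_seg.mpr fun _ _ => rfl

lemma occursAt_σt {x : ℤ → A} {t k : ℤ} {w : List A} :
    OccursAt (σt t x) k w ↔ OccursAt x (k + t) w := by
  rw [occursAt_iff, occursAt_iff]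
  constructor
  · intro h m hm
    rw [(congrArg x (by ring : k + t + (m:ℤ) = (k + m) + t) : x (k + t + m) = x (k + m + t))]
    exact h m hm
  · intro h m hm
    have := h m hm
    rw [(congrArg x (by ring : k + t + (m:ℤ) = (k + m) + t) : x (k + t + m) = x (k + m + t))] at this
    exact this

lemma occursAt_append {z : ℤ → A} {k : ℤ} {u v : List A} :
    OccursAt z k (u ++ v) ↔ OccursAt z k u ∧ OccursAt z (k + u.length) v := by
  rw [occursAt_iff, occursAt_iff, occursAt_iff]
  constructor
  · intro h
    constructor
    · intro m hm
      have hm' : m < (u ++ v).length := by simp; omega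
      have := h m hm'
      rwa [List.getElem_append_left hm] at this
    · intro m hm
      have hm' : u.length + m < (u ++ v).length := by simp; omega
      have := h (u.length + m) hm'
      rw [List.getElem_append_right (by omega)] at this
      simp only [Nat.add_sub_cancel_left] at this
      rw [← this]
      exact congrArg z (by push_cast; ring)
  · intro ⟨h1, h2⟩ m hm
    by_cases hc : m < u.length
    · rw [List.getElem_append_left hc]
      exact h1 m hc
    · have hc' : u.length ≤ m := by omega
      rw [List.getElem_append_right hc']
      have hm2 : m - u.length < v.length := by simp at hm; omega
      have := h2 (m - u.length) hm2
      rw [← this]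
      exact congrArg z (by omega)

lemma seg_append (x : ℤ → A) (s : ℤ) (m k : ℕ) :
    seg x s m ++ seg x (s + m) k = seg x s (m + k) := by
  apply List.ext_getElem
  · simp
  · intro n h1 h2
    have h2' : n < m + k := by simpa using h2
    rw [show (seg x s (m + k))[n] = x (s + n) by simp [seg]]
    by_cases hc : n < m
    · rw [List.getElem_append_left (by simpa using hc)]
      simp [seg]
    · rw [List.getElem_append_right (by simpa using hc)]
      simp only [length_seg]
      simp only [seg, List.getElem_ofFn]
      congr 1
      omega

lemma exists_point_occursAt [TopologicalSpace A] {X : Set (ℤ → A)} (hX : IsSubshift X)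
    {w : List A} (h : WordIn X w) (p : ℤ) : ∃ x ∈ X, OccursAt x p w := by
  obtain ⟨x, hx, k, hk⟩ := h
  exact ⟨σt (k - p) x, mem_σt hX _ hx, occursAt_σt.mpr (by rwa [(by ring : p + (k - p) = k)])⟩

lemma wordIn_of_occursAt [TopologicalSpace A] {X : Set (ℤ → A)} {x : ℤ → A} (hx : x ∈ X)
    {k : ℤ} {w : List A} (h : OccursAt x k w) : WordIn X w := ⟨x, hx, k, h⟩

end RCOAux
namespace RCOAux

open Set Filter Topology

variable {A : Type*} {B : Type*} [TopologicalSpace A] [TopologicalSpace B]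
variable {X : Set (ℤ → A)} {Y : Set (ℤ → B)}

/-- The underlying function of the image of a point. -/
def Φ (φ : X → Y) (x : ℤ → A) (hx : x ∈ X) : ℤ → B := (φ ⟨x, hx⟩ : ℤ → B)

lemma Φ_mem (φ : X → Y) (x : ℤ → A) (hx : x ∈ X) : Φ φ x hx ∈ Y := (φ ⟨x, hx⟩).2

lemma Φ_congr (φ : X → Y) {x x' : ℤ → A} (hx : x ∈ X) (e : x = x') (hx' : x' ∈ X) :
    Φ φ x hx = Φ φ x' hx' := by subst e; rfl

lemma Φ_σt {φ : X → Y} (hX : IsSubshift X) (hφ : IsCode φ) (t : ℤ) {x : ℤ → A} (hx : x ∈ X)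
    (h : σt t x ∈ X) : Φ φ (σt t x) h = σt t (Φ φ x hx) := by
  revert h
  induction t using Int.induction_on with
  | zero =>
      intro h
      rw [Φ_congr φ h (σt_zero x) hx, σt_zero]
  | succ n ih =>
      intro h
      have hn : σt (n : ℤ) x ∈ X := mem_σt hX _ hx
      have h1 : σt ((n : ℤ) + 1) x = shiftMap (σt (n : ℤ) x) := σt_succ _ _
      have h2 : shiftMap (σt (n : ℤ) x) ∈ X := h1 ▸ h
      have h3 := hφ.2 ⟨σt (n : ℤ) x, hn⟩ h2
      calc Φ φ (σt ((n : ℤ) + 1) x) h = Φ φ (shiftMap (σt (n : ℤ) x)) h2 := Φ_congr φ h h1 h2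
        _ = shiftMap (Φ φ (σt (n : ℤ) x) hn) := h3
        _ = σt ((n : ℤ) + 1) (Φ φ x hx) := by rw [ih hn, ← σt_succ]
  | pred n ih =>
      intro h
      have hz : σt (-(n : ℤ)) x ∈ X := mem_σt hX _ hx
      have e1 : σt (-(n : ℤ) - 1 + 1) x = σt (-(n : ℤ)) x := congrArg (fun t => σt t x) (by ring)
      have h2 : shiftMap (σt (-(n : ℤ) - 1) x) ∈ X := by rw [← σt_succ, e1]; exact hz
      have h3 := hφ.2 ⟨σt (-(n : ℤ) - 1) x, h⟩ h2
      have h4 : Φ φ (shiftMap (σt (-(n : ℤ) - 1) x)) h2 = σt (-(n : ℤ)) (Φ φ x hx) := by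
        have h5 : shiftMap (σt (-(n : ℤ) - 1) x) = σt (-(n : ℤ)) x := by rw [← σt_succ, e1]
        rw [Φ_congr φ h2 h5 hz]
        exact ih hz
      have h3' : Φ φ (shiftMap (σt (-(n : ℤ) - 1) x)) h2 = shiftMap (Φ φ (σt (-(n : ℤ) - 1) x) h) := h3
      rw [h4] at h3'
      have h3 := h3'
      clear h3'
      have h6 := congrArg (σt (-1)) h3
      rw [shiftMap_eq_σt, σt_σt, σt_σt] at h6
      rw [show ((1 : ℤ) + -1) = 0 by ring, σt_zero] at h6
      rw [show (-(n : ℤ) + -1) = -(n : ℤ) - 1 by ring] at h6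
      exact h6.symm

/-! ### Topological helpers -/

lemma isOpen_eqset {Z D : Type*} [TopologicalSpace Z] [TopologicalSpace D] [DiscreteTopology D]
    {a b : Z → D} (ha : Continuous a) (hb : Continuous b) : IsOpen {z | a z = b z} := by
  have he : {z | a z = b z} = ⋃ v : D, a ⁻¹' {v} ∩ b ⁻¹' {v} := by
    ext z
    simp only [Set.mem_setOf_eq, Set.mem_iUnion, Set.mem_inter_iff, Set.mem_preimage,
      Set.mem_singleton_iff]
    exact ⟨fun h => ⟨b z, h, rfl⟩, fun ⟨v, h1, h2⟩ => h1.trans h2.symm⟩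
  rw [he]
  exact isOpen_iUnion fun v =>
    ((isOpen_discrete _).preimage ha).inter ((isOpen_discrete _).preimage hb)

section Compactness

variable [Finite A] [DiscreteTopology A] [Finite B] [DiscreteTopology B]
variable {φ : X → Y}

/-- Uniform block-code radius. -/
lemma exists_block_radius (hX : IsSubshift X) (hφ : IsCode φ) :
    ∃ r : ℕ, ∀ x (hx : x ∈ X) x' (hx' : x' ∈ X) (c : ℤ),
      (∀ i, c - r ≤ i → i ≤ c + r → x i = x' i) → Φ φ x hx c = Φ φ x' hx' c := by
  haveI : CompactSpace (↥X) := isCompact_iff_compactSpace.mp hX.1.isCompact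
  have c1 : ∀ i : ℤ, Continuous (fun p : ↥X × ↥X => p.1.1 i) :=
    fun i => (continuous_apply i).comp (continuous_subtype_val.comp continuous_fst)
  have c1' : ∀ i : ℤ, Continuous (fun p : ↥X × ↥X => p.2.1 i) :=
    fun i => (continuous_apply i).comp (continuous_subtype_val.comp continuous_snd)
  have c2 : Continuous (fun p : ↥X × ↥X => (φ p.1).1 0) :=
    (continuous_apply 0).comp (continuous_subtype_val.comp (hφ.1.comp continuous_fst))
  have c2' : Continuous (fun p : ↥X × ↥X => (φ p.2).1 0) :=
    (continuous_apply 0).comp (continuous_subtype_val.comp (hφ.1.comp continuous_snd))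
  -- first, the centered version
  have key : ∃ r : ℕ, ∀ x (hx : x ∈ X) x' (hx' : x' ∈ X),
      (∀ i : ℤ, -(r:ℤ) ≤ i → i ≤ r → x i = x' i) → Φ φ x hx 0 = Φ φ x' hx' 0 := by
    by_contra hcon
    push_neg at hcon
    set t : ℕ → Set (↥X × ↥X) := fun n =>
      (⋂ i ∈ Set.Icc (-(n:ℤ)) (n:ℤ), {p : ↥X × ↥X | p.1.1 i = p.2.1 i}) ∩
        {p : ↥X × ↥X | (φ p.1).1 0 = (φ p.2).1 0}ᶜ with ht
    have hclosed : ∀ n, IsClosed (t n) := by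
      intro n
      exact (isClosed_biInter fun i _ => isClosed_eq (c1 i) (c1' i)).inter
        (isClosed_compl_iff.mpr (isOpen_eqset c2 c2'))
    have hmono : ∀ n, t (n + 1) ⊆ t n := by
      intro n p hp
      refine ⟨?_, hp.2⟩
      have := hp.1
      simp only [Set.mem_iInter] at this ⊢
      intro i hi
      exact this i (by simp only [Set.mem_Icc] at hi ⊢; push_cast; omega)
    have hne : ∀ n, (t n).Nonempty := by
      intro n
      obtain ⟨x, hx, x', hx', hagr, hneq⟩ := hcon n
      refine ⟨(⟨x, hx⟩, ⟨x', hx'⟩), ?_, hneq⟩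
      simp only [Set.mem_iInter]
      intro i hi
      simp only [Set.mem_Icc] at hi
      exact hagr i hi.1 hi.2
    obtain ⟨p, hp⟩ := IsCompact.nonempty_iInter_of_sequence_nonempty_isCompact_isClosed t
      hmono hne (hclosed 0).isCompact hclosed
    simp only [Set.mem_iInter] at hp
    have hagree : p.1.1 = p.2.1 := by
      funext i
      have := (hp (i.natAbs)).1
      simp only [Set.mem_iInter] at this
      exact this i (by simp only [Set.mem_Icc]; omega)
    have : p.1 = p.2 := Subtype.ext hagree
    exact (hp 0).2 (show (φ p.1).1 0 = (φ p.2).1 0 by rw [this])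
  obtain ⟨r, hr⟩ := key
  refine ⟨r, fun x hx x' hx' c hagr => ?_⟩
  have hxc : σt c x ∈ X := mem_σt hX _ hx
  have hxc' : σt c x' ∈ X := mem_σt hX _ hx'
  have h0 : Φ φ (σt c x) hxc 0 = Φ φ (σt c x') hxc' 0 := by
    apply hr
    intro i h1 h2
    exact hagr (i + c) (by omega) (by omega)
  rw [Φ_σt hX hφ c hx hxc, Φ_σt hX hφ c hx' hxc'] at h0
  simpa [σt_apply] using h0

/-- Uniform right-closing delay. -/
lemma exists_closing_delay (hX : IsSubshift X) (hφ : IsCode φ) (hrc : RightClosing φ) :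
    ∃ M : ℕ, ∀ x (hx : x ∈ X) x' (hx' : x' ∈ X) (c : ℤ),
      (∀ i, c - M ≤ i → i ≤ c → x i = x' i) →
      (∀ i, c - M ≤ i → i ≤ c + M → Φ φ x hx i = Φ φ x' hx' i) →
      x (c + 1) = x' (c + 1) := by
  haveI : CompactSpace (↥X) := isCompact_iff_compactSpace.mp hX.1.isCompact
  have c1 : ∀ i : ℤ, Continuous (fun p : ↥X × ↥X => p.1.1 i) :=
    fun i => (continuous_apply i).comp (continuous_subtype_val.comp continuous_fst)
  have c1' : ∀ i : ℤ, Continuous (fun p : ↥X × ↥X => p.2.1 i) :=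
    fun i => (continuous_apply i).comp (continuous_subtype_val.comp continuous_snd)
  have c2 : ∀ i : ℤ, Continuous (fun p : ↥X × ↥X => (φ p.1).1 i) :=
    fun i => (continuous_apply i).comp (continuous_subtype_val.comp (hφ.1.comp continuous_fst))
  have c2' : ∀ i : ℤ, Continuous (fun p : ↥X × ↥X => (φ p.2).1 i) :=
    fun i => (continuous_apply i).comp (continuous_subtype_val.comp (hφ.1.comp continuous_snd))
  have key : ∃ M : ℕ, ∀ x (hx : x ∈ X) x' (hx' : x' ∈ X),
      (∀ i : ℤ, -(M:ℤ) ≤ i → i ≤ 0 → x i = x' i) →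
      (∀ i : ℤ, -(M:ℤ) ≤ i → i ≤ M → Φ φ x hx i = Φ φ x' hx' i) →
      x 1 = x' 1 := by
    by_contra hcon
    push_neg at hcon
    set t : ℕ → Set (↥X × ↥X) := fun n =>
      ((⋂ i ∈ Set.Icc (-(n:ℤ)) 0, {p : ↥X × ↥X | p.1.1 i = p.2.1 i}) ∩
        ⋂ i ∈ Set.Icc (-(n:ℤ)) (n:ℤ), {p : ↥X × ↥X | (φ p.1).1 i = (φ p.2).1 i}) ∩
        {p : ↥X × ↥X | p.1.1 1 = p.2.1 1}ᶜ with ht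
    have hclosed : ∀ n, IsClosed (t n) := by
      intro n
      exact ((isClosed_biInter fun i _ => isClosed_eq (c1 i) (c1' i)).inter
        (isClosed_biInter fun i _ => isClosed_eq (c2 i) (c2' i))).inter
        (isClosed_compl_iff.mpr (isOpen_eqset (c1 1) (c1' 1)))
    have hmono : ∀ n, t (n + 1) ⊆ t n := by
      intro n p hp
      refine ⟨⟨?_, ?_⟩, hp.2⟩
      · have := hp.1.1
        simp only [Set.mem_iInter] at this ⊢
        intro i hi
        exact this i (by simp only [Set.mem_Icc] at hi ⊢; push_cast; omega)
      · have := hp.1.2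
        simp only [Set.mem_iInter] at this ⊢
        intro i hi
        exact this i (by simp only [Set.mem_Icc] at hi ⊢; push_cast; omega)
    have hne : ∀ n, (t n).Nonempty := by
      intro n
      obtain ⟨x, hx, x', hx', h1, h2, hneq⟩ := hcon n
      refine ⟨(⟨x, hx⟩, ⟨x', hx'⟩), ⟨?_, ?_⟩, hneq⟩
      · simp only [Set.mem_iInter]
        intro i hi
        simp only [Set.mem_Icc] at hi
        exact h1 i hi.1 hi.2
      · simp only [Set.mem_iInter]
        intro i hi
        simp only [Set.mem_Icc] at hi
        exact h2 i hi.1 hi.2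
    obtain ⟨p, hp⟩ := IsCompact.nonempty_iInter_of_sequence_nonempty_isCompact_isClosed t
      hmono hne (hclosed 0).isCompact hclosed
    simp only [Set.mem_iInter] at hp
    have hleft : LeftAsymptotic (p.1.1 : ℤ → A) (p.2.1 : ℤ → A) := by
      refine ⟨0, fun i hi => ?_⟩
      have := (hp (i.natAbs)).1.1
      simp only [Set.mem_iInter] at this
      exact this i (by simp only [Set.mem_Icc]; omega)
    have himg : φ p.1 = φ p.2 := by
      apply Subtype.ext
      funext i
      have := (hp (i.natAbs)).1.2
      simp only [Set.mem_iInter] at this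
      exact this i (by simp only [Set.mem_Icc]; omega)
    have : p.1 = p.2 := hrc p.1 p.2 hleft himg
    exact (hp 0).2 (show p.1.1 1 = p.2.1 1 by rw [this])
  obtain ⟨M, hM⟩ := key
  refine ⟨M, fun x hx x' hx' c h1 h2 => ?_⟩
  have hxc : σt c x ∈ X := mem_σt hX _ hx
  have hxc' : σt c x' ∈ X := mem_σt hX _ hx'
  have h0 : σt c x 1 = σt c x' 1 := by
    apply hM _ hxc _ hxc'
    · intro i ha hb
      exact h1 (i + c) (by omega) (by omega)
    · intro i ha hb
      rw [Φ_σt hX hφ c hx hxc, Φ_σt hX hφ c hx' hxc']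
      exact h2 (i + c) (by omega) (by omega)
  have h0' : x (1 + c) = x' (1 + c) := h0
  rw [show c + 1 = 1 + c by ring]
  exact h0'

end Compactness

end RCOAux
namespace RCOAux

open Set Filter Topology

section Part2

variable {A : Type*} {B : Type*} [TopologicalSpace A] [TopologicalSpace B]
variable {X : Set (ℤ → A)} {Y : Set (ℤ → B)}
variable [Finite A] [DiscreteTopology A] [Finite B] [DiscreteTopology B]
variable {φ : X → Y}

/-- Uniform openness radius. -/
lemma exists_open_radius (hX : IsSubshift X) (hY : IsSubshift Y) (hφ : IsCode φ)
    (hopen : IsOpenMap φ) (M : ℕ) :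
    ∃ K : ℕ, M ≤ K ∧ ∀ x (hx : x ∈ X) y' (hy' : y' ∈ Y) (c : ℤ),
      (∀ i, c - K ≤ i → i ≤ c + K → y' i = Φ φ x hx i) →
      ∃ x', ∃ (hx' : x' ∈ X), (∀ i, c - M ≤ i → i ≤ c + M → x' i = x i) ∧ Φ φ x' hx' = y' := by
  haveI : CompactSpace (↥X) := isCompact_iff_compactSpace.mp hX.1.isCompact
  haveI : CompactSpace (↥Y) := isCompact_iff_compactSpace.mp hY.1.isCompact
  set U : ↥X → Set ↥X := fun x₀ => {z : ↥X | ∀ i ∈ Set.Icc (-(M:ℤ)) (M:ℤ), z.1 i = x₀.1 i}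
    with hU
  have hUopen : ∀ x₀, IsOpen (U x₀) := by
    intro x₀
    have he : U x₀ = ⋂ i ∈ Set.Icc (-(M:ℤ)) (M:ℤ), {z : ↥X | z.1 i = x₀.1 i} := by
      ext z; simp [hU, Set.mem_iInter]
    rw [he]
    exact (Set.finite_Icc _ _).isOpen_biInter fun i _ =>
      isOpen_eqset ((continuous_apply i).comp continuous_subtype_val) continuous_const
  set G : Set (↥X × ↥Y) := ⋃ x₀ : ↥X, (U x₀) ×ˢ (φ '' (U x₀)) with hG
  have hGopen : IsOpen G := isOpen_iUnion fun x₀ => (hUopen x₀).prod (hopen _ (hUopen x₀))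
  have key : ∃ n : ℕ, ∀ p : ↥X × ↥Y,
      (∀ i ∈ Set.Icc (-(n:ℤ)) (n:ℤ), p.2.1 i = (φ p.1).1 i) → p ∈ G := by
    by_contra hcon
    push_neg at hcon
    set t : ℕ → Set (↥X × ↥Y) := fun n =>
      (⋂ i ∈ Set.Icc (-(n:ℤ)) (n:ℤ), {p : ↥X × ↥Y | p.2.1 i = (φ p.1).1 i}) ∩ Gᶜ with htdef
    have hclosed : ∀ n, IsClosed (t n) := fun n =>
      (isClosed_biInter fun i _ => isClosed_eq
        ((continuous_apply i).comp (continuous_subtype_val.comp continuous_snd))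
        ((continuous_apply i).comp (continuous_subtype_val.comp (hφ.1.comp continuous_fst)))).inter
        (isClosed_compl_iff.mpr hGopen)
    have hmono : ∀ n, t (n + 1) ⊆ t n := by
      intro n p hp
      refine ⟨?_, hp.2⟩
      have := hp.1
      simp only [Set.mem_iInter] at this ⊢
      intro i hi
      exact this i (by simp only [Set.mem_Icc] at hi ⊢; push_cast; omega)
    have hne : ∀ n, (t n).Nonempty := by
      intro n
      obtain ⟨p, hp1, hp2⟩ := hcon n
      refine ⟨p, ?_, hp2⟩
      simp only [Set.mem_iInter]
      intro i hi
      exact hp1 i hi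
    obtain ⟨p, hp⟩ := IsCompact.nonempty_iInter_of_sequence_nonempty_isCompact_isClosed t
      hmono hne (hclosed 0).isCompact hclosed
    simp only [Set.mem_iInter] at hp
    have heq : p.2 = φ p.1 := by
      apply Subtype.ext
      funext i
      have := (hp i.natAbs).1
      simp only [Set.mem_iInter] at this
      exact this i (by simp only [Set.mem_Icc]; omega)
    have : p ∈ G := by
      rw [hG]
      refine Set.mem_iUnion.mpr ⟨p.1, ?_⟩
      refine Set.mk_mem_prod ?_ ?_
      · intro i _; rfl
      · exact ⟨p.1, fun i _ => rfl, heq.symm⟩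
    exact (hp 0).2 this
  obtain ⟨n, hn⟩ := key
  refine ⟨n + M, by omega, ?_⟩
  intro x hx y' hy' c hagr
  have hx₁ : σt c x ∈ X := mem_σt hX _ hx
  have hy₁ : σt c y' ∈ Y := mem_σt hY _ hy'
  have hp : ((⟨σt c x, hx₁⟩ : ↥X), (⟨σt c y', hy₁⟩ : ↥Y)) ∈ G := by
    apply hn
    intro i hi
    simp only [Set.mem_Icc] at hi
    have h1 : (φ (⟨σt c x, hx₁⟩ : ↥X)).1 = σt c (Φ φ x hx) := Φ_σt hX hφ c hx hx₁
    show σt c y' i = _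
    rw [h1, σt_apply, σt_apply]
    exact hagr (i + c) (by omega) (by omega)
  rw [hG] at hp
  obtain ⟨x₀, hmem⟩ := Set.mem_iUnion.mp hp
  obtain ⟨hfst, z, hzU, hzφ⟩ := hmem
  have hx' : σt (-c) z.1 ∈ X := mem_σt hX _ z.2
  refine ⟨σt (-c) z.1, hx', ?_, ?_⟩
  · intro i h1 h2
    have e1 : z.1 (i + -c) = x₀.1 (i + -c) := hzU (i + -c) (by simp only [Set.mem_Icc]; omega)
    have e2 : σt c x (i + -c) = x₀.1 (i + -c) := hfst (i + -c) (by simp only [Set.mem_Icc]; omega)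
    rw [σt_apply] at e2
    rw [σt_apply, e1, ← e2]
    exact congrArg x (by ring)
  · have hc1 : Φ φ (σt (-c) z.1) hx' = σt (-c) (Φ φ z.1 z.2) := Φ_σt hX hφ (-c) z.2 hx'
    have hc2 : Φ φ z.1 z.2 = σt c y' := by
      show (φ ⟨z.1, z.2⟩).1 = σt c y'
      rw [show (⟨z.1, z.2⟩ : ↥X) = z from rfl, hzφ]
    rw [hc1, hc2, σt_σt]
    rw [show (c + -c : ℤ) = 0 by ring, σt_zero]

/-- Right-propagation of agreement using the uniform closing delay. -/
lemma propagate (M : ℕ)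
    (hM : ∀ x (hx : x ∈ X) x' (hx' : x' ∈ X) (c : ℤ),
      (∀ i, c - M ≤ i → i ≤ c → x i = x' i) →
      (∀ i, c - M ≤ i → i ≤ c + M → Φ φ x hx i = Φ φ x' hx' i) →
      x (c + 1) = x' (c + 1))
    {x x' : ℤ → A} (hx : x ∈ X) (hx' : x' ∈ X) (c b : ℤ)
    (hseed : ∀ i, c - M ≤ i → i ≤ c → x i = x' i)
    (himg : ∀ i, c - M ≤ i → i ≤ b + M → Φ φ x hx i = Φ φ x' hx' i) :
    ∀ j, c - M ≤ j → j ≤ b + 1 → x j = x' j := by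
  have main : ∀ d : ℕ, ∀ j, c ≤ j → j = c + d → j ≤ b + 1 → x j = x' j := by
    intro d
    induction d using Nat.strong_induction_on with
    | _ d ih =>
      intro j hcj hjd hjb
      rcases Nat.eq_zero_or_pos d with h0 | hpos
      · have hjc : j = c := by omega
        rw [hjc]; exact hseed c (by omega) le_rfl
      · have hseed' : ∀ i, (j - 1) - M ≤ i → i ≤ (j - 1) → x i = x' i := by
          intro i h1 h2
          by_cases hic : i ≤ c
          · exact hseed i (by omega) hic
          · exact ih (i - c).toNat (by omega) i (by omega) (by omega) (by omega)
        have himg' : ∀ i, (j - 1) - M ≤ i → i ≤ (j - 1) + M → Φ φ x hx i = Φ φ x' hx' i := by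
          intro i h1 h2
          exact himg i (by omega) (by omega)
        have happ := hM x hx x' hx' (j - 1) hseed' himg'
        rw [show j - 1 + 1 = j by ring] at happ
        exact happ
  intro j h1 h2
  by_cases hc : j ≤ c
  · exact hseed j h1 hc
  · exact main (j - c).toNat j (by omega) (by omega) h2

end Part2

end RCOAux
namespace RCOAux

open Set Filter Topology

section Part3

variable {A : Type*} {B : Type*} [TopologicalSpace A] [TopologicalSpace B]
variable {X : Set (ℤ → A)} {Y : Set (ℤ → B)}

/-- Gluing lemma for an SFT. -/
lemma glueY (hYsft : IsSFT Y) :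
    ∃ g : ℕ, ∀ y (hy : y ∈ Y) y' (hy' : y' ∈ Y) (p : ℤ),
      (∀ i, p ≤ i → i ≤ p + g → y i = y' i) →
      ∃ z ∈ Y, (∀ i, i ≤ p → z i = y i) ∧ (∀ i, p ≤ i → z i = y' i) := by
  classical
  obtain ⟨F, hF⟩ := hYsft
  refine ⟨F.sup List.length, ?_⟩
  intro y hy y' hy' p hagr
  set g : ℕ := F.sup List.length with hgdef
  set z : ℤ → B := fun i => if i ≤ p then y i else y' i with hzdef
  have hz1 : ∀ i, i ≤ p → z i = y i := fun i h => by simp only [hzdef, if_pos h]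
  have hz2 : ∀ i, p ≤ i → z i = y' i := by
    intro i h
    by_cases hc : i ≤ p
    · have hip : i = p := le_antisymm hc h
      rw [hip, hz1 p le_rfl]
      exact hagr p le_rfl (by omega)
    · simp only [hzdef, if_neg hc]
  refine ⟨z, ?_, hz1, hz2⟩
  rw [hF]
  intro w hw k hocc
  have hwlen : (w.length : ℤ) ≤ (g : ℤ) := by exact_mod_cast Finset.le_sup (f := List.length) hw
  have hy2 := hy
  have hy'2 := hy'
  rw [hF] at hy2 hy'2
  by_cases hk : p + 1 ≤ k
  · apply hy'2 w hw k
    rw [occursAt_iff] at hocc ⊢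
    intro m hm
    rw [← hz2 (k + m) (by omega)]
    exact hocc m hm
  · apply hy2 w hw k
    rw [occursAt_iff] at hocc ⊢
    intro m hm
    have hm' : (m : ℤ) < w.length := by exact_mod_cast hm
    have e : z (k + m) = y (k + m) := by
      by_cases hc : k + m ≤ p
      · exact hz1 _ hc
      · rw [hz2 _ (by omega)]
        exact (hagr (k + m) (by omega) (by omega)).symm
    rw [← e]
    exact hocc m hm

section FB
variable [Finite A] [DiscreteTopology A] [Finite B] [DiscreteTopology B]
variable {φ : X → Y}

/-- Fibers have at most `D` elements, given the pigeonhole bound `hD`. -/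
lemma fiber_bound (M : ℕ)
    (hM : ∀ x (hx : x ∈ X) x' (hx' : x' ∈ X) (c : ℤ),
      (∀ i, c - M ≤ i → i ≤ c → x i = x' i) →
      (∀ i, c - M ≤ i → i ≤ c + M → Φ φ x hx i = Φ φ x' hx' i) →
      x (c + 1) = x' (c + 1))
    (D : ℕ)
    (hD : ∀ g : Fin (D + 1) → (Fin (M + 1) → A), ∃ j j', j ≠ j' ∧ g j = g j')
    (f : Fin (D + 1) → ℤ → A) (hf : ∀ j, f j ∈ X)
    (himg : ∀ j j', Φ φ (f j) (hf j) = Φ φ (f j') (hf j')) :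
    ∃ j j', j ≠ j' ∧ f j = f j' := by
  have step : ∀ m : ℕ, ∃ j j' : Fin (D + 1), j ≠ j' ∧
      ∀ i : ℤ, -(m : ℤ) - M ≤ i → i ≤ -(m : ℤ) → f j i = f j' i := by
    intro m
    obtain ⟨j, j', hne, heq⟩ := hD (fun j i => f j (-(m : ℤ) - M + i.1))
    refine ⟨j, j', hne, ?_⟩
    intro i h1 h2
    set u : ℕ := (i - (-(m : ℤ) - M)).toNat with hu
    have hult : u < M + 1 := by omega
    have h3 := congrFun heq ⟨u, hult⟩
    have h4 : f j (-(m : ℤ) - M + (u : ℤ)) = f j' (-(m : ℤ) - M + (u : ℤ)) := h3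
    have e : -(m : ℤ) - M + (u : ℤ) = i := by omega
    rwa [e] at h4
  choose jf jf' hne hagr using step
  obtain ⟨pr, hpr⟩ := Finite.exists_infinite_fiber (fun m : ℕ => (jf m, jf' m))
  rw [Set.infinite_coe_iff] at hpr
  set S := (fun m : ℕ => (jf m, jf' m)) ⁻¹' {pr} with hS
  have hSunb : ∀ t : ℕ, ∃ m ∈ S, t ≤ m := by
    intro t
    by_contra hcon
    push_neg at hcon
    refine hpr (Set.Finite.subset (Finset.range t).finite_toSet fun m hm => ?_)
    simp only [Finset.coe_range, Set.mem_Iio]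
    exact hcon m hm
  have hprj : ∀ m ∈ S, jf m = pr.1 ∧ jf' m = pr.2 := by
    intro m hm
    simp only [hS, Set.mem_preimage, Set.mem_singleton_iff] at hm
    exact ⟨congrArg Prod.fst hm, congrArg Prod.snd hm⟩
  obtain ⟨m₀, hm₀S, _⟩ := hSunb 0
  refine ⟨pr.1, pr.2, ?_, ?_⟩
  · rw [← (hprj m₀ hm₀S).1, ← (hprj m₀ hm₀S).2]
    exact hne m₀
  funext i
  obtain ⟨m, hmS, hmt⟩ := hSunb (M + 1 + i.natAbs)
  have hjm := hprj m hmS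
  have hseed : ∀ i', -(m : ℤ) - M ≤ i' → i' ≤ -(m : ℤ) → f pr.1 i' = f pr.2 i' := by
    intro i' h1 h2
    rw [← hjm.1, ← hjm.2]
    exact hagr m i' h1 h2
  have hprop := propagate M hM (hf pr.1) (hf pr.2) (-(m : ℤ)) i
    (fun i' h1 h2 => hseed i' (by omega) h2)
    (fun i' _ _ => by rw [himg pr.1 pr.2])
  exact hprop i (by omega) (by omega)

end FB

end Part3

end RCOAux
namespace RCOAux

open Set Filter Topology

section Part4

variable {A : Type*} {B : Type*} [TopologicalSpace A] [TopologicalSpace B]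
variable {X : Set (ℤ → A)} {Y : Set (ℤ → B)}
variable [Finite A] [DiscreteTopology A] [Finite B] [DiscreteTopology B]
variable {φ : X → Y}

lemma seg_append' (x : ℤ → A) (s s' : ℤ) (m k : ℕ) (h : s' = s + m) :
    seg x s m ++ seg x s' k = seg x s (m + k) := by
  subst h; exact seg_append x s m k

lemma seg_len_congr (x : ℤ → A) (s : ℤ) {m k : ℕ} (h : m = k) : seg x s m = seg x s k := by
  rw [h]

lemma seg_pos_congr (x : ℤ → A) {s s' : ℤ} (len : ℕ) (h : s = s') : seg x s len = seg x s' len := by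
  rw [h]

/-- The language of `X` has the finite-type gluing property. -/
lemma glueX (hX : IsSubshift X) (hY : IsSubshift Y) (hφ : IsCode φ) (hrc : RightClosing φ)
    (hopen : IsOpenMap φ) (hYsft : IsSFT Y) :
    ∃ N : ℕ, ∀ u v w : List A, WordIn X (u ++ v) → WordIn X (v ++ w) →
      N ≤ v.length → WordIn X (u ++ v ++ w) := by
  obtain ⟨r, hr⟩ := exists_block_radius hX hφ
  obtain ⟨M, hM⟩ := exists_closing_delay hX hφ hrc
  obtain ⟨K, hKM, hK⟩ := exists_open_radius hX hY hφ hopen M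
  obtain ⟨g, hg⟩ := glueY hYsft
  refine ⟨2*r + g + 2*M + 2*K + 20, ?_⟩
  intro u v w huv hvw hlen
  have hlenZ : (2*r + g + 2*M + 2*K + 20 : ℤ) ≤ (v.length : ℤ) := by exact_mod_cast hlen
  set a₀ : ℤ := 1 - (v.length : ℤ) - (u.length : ℤ) with ha₀
  obtain ⟨x, hx, hxocc⟩ := exists_point_occursAt hX huv a₀
  obtain ⟨xb, hxb, hxbocc⟩ := exists_point_occursAt hX hvw (1 - (v.length : ℤ))
  have hxu : OccursAt x a₀ u := (occursAt_append.mp hxocc).1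
  have hxv : OccursAt x (1 - (v.length : ℤ)) v := by
    have h2 := (occursAt_append.mp hxocc).2
    rwa [show a₀ + (u.length : ℤ) = 1 - (v.length : ℤ) by omega] at h2
  have hxbv : OccursAt xb (1 - (v.length : ℤ)) v := (occursAt_append.mp hxbocc).1
  have hxbw : OccursAt xb 1 w := by
    have h2 := (occursAt_append.mp hxbocc).2
    rwa [show 1 - (v.length : ℤ) + (v.length : ℤ) = 1 by ring] at h2
  have hagree : ∀ i, 1 - (v.length : ℤ) ≤ i → i ≤ 0 → x i = xb i := by
    intro i h1 h2
    have hmlt : (i - (1 - (v.length : ℤ))).toNat < v.length := by omega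
    have e1 := occursAt_iff.mp hxv _ hmlt
    have e2 := occursAt_iff.mp hxbv _ hmlt
    have e3 := e1.trans e2.symm
    rwa [show 1 - (v.length : ℤ) + ((i - (1 - (v.length : ℤ))).toNat : ℤ) = i by omega] at e3
  have himgagree : ∀ i, 1 - (v.length : ℤ) + r ≤ i → i ≤ -(r:ℤ) →
      Φ φ x hx i = Φ φ xb hxb i := by
    intro i h1 h2
    exact hr x hx xb hxb i fun i' ha hb => hagree i' (by omega) (by omega)
  set p : ℤ := -(r:ℤ) - g - 2*M - 2 with hpd
  obtain ⟨z, hz, hz1, hz2⟩ := hg (Φ φ x hx) (Φ_mem φ x hx) (Φ φ xb hxb) (Φ_mem φ xb hxb) p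
      (fun i h1 h2 => himgagree i (by omega) (by omega))
  have hzley : ∀ i, i ≤ -(r:ℤ) → z i = Φ φ x hx i := by
    intro i hi
    by_cases hcc : i ≤ p
    · exact hz1 i hcc
    · rw [hz2 i (by omega)]
      exact (himgagree i (by omega) (by omega)).symm
  set c : ℤ := a₀ - K - r with hcd
  obtain ⟨x', hx', hxag, hximg⟩ := hK x hx z hz c (fun i h1 h2 => hzley i (by omega))
  have hpropA := propagate M hM hx' hx c (-(r:ℤ) - M)
      (fun i h1 h2 => hxag i (by omega) (by omega))
      (fun i h1 h2 => by rw [hximg]; exact hzley i (by omega))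
  have hseedB : ∀ i, (-(r:ℤ) - M) - M ≤ i → i ≤ -(r:ℤ) - M → x' i = xb i := by
    intro i h1 h2
    rw [hpropA i (by omega) (by omega)]
    exact hagree i (by omega) (by omega)
  have hpropB := propagate M hM hx' hxb (-(r:ℤ) - M) ((w.length : ℤ) + 1)
      hseedB
      (fun i h1 h2 => by rw [hximg]; exact hz2 i (by omega))
  refine ⟨x', hx', a₀, ?_⟩
  apply occursAt_append.mpr
  constructor
  · apply occursAt_append.mpr
    constructor
    · rw [occursAt_iff] at hxu ⊢
      intro m hm
      have hm' : (m : ℤ) < u.length := by exact_mod_cast hm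
      rw [hpropA (a₀ + m) (by omega) (by omega)]
      exact hxu m hm
    · rw [occursAt_iff] at hxbv hxv ⊢
      intro m hm
      have hm' : (m : ℤ) < v.length := by exact_mod_cast hm
      have e : a₀ + (u.length : ℤ) + m = (1 - (v.length : ℤ)) + m := by omega
      by_cases hq : (1 - (v.length : ℤ)) + (m : ℤ) ≤ -(r:ℤ) - M
      · rw [e, hpropA _ (by omega) (by omega)]
        exact hxv m hm
      · rw [e, hpropB _ (by omega) (by omega)]
        exact hxbv m hm
  · rw [occursAt_iff] at hxbw ⊢
    intro m hm
    have hm' : (m : ℤ) < w.length := by exact_mod_cast hm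
    have e : a₀ + ((u ++ v).length : ℤ) + m = 1 + m := by
      simp only [List.length_append]
      push_cast
      omega
    rw [e, hpropB _ (by omega) (by omega)]
    exact hxbw m hm

/-- If the language has the gluing property then `X` is an SFT. -/
lemma sft_of_glue (hX : IsSubshift X) (N : ℕ)
    (hN : ∀ u v w : List A, WordIn X (u ++ v) → WordIn X (v ++ w) →
      N ≤ v.length → WordIn X (u ++ v ++ w)) : IsSFT X := by
  classical
  haveI : Fintype A := Fintype.ofFinite A
  refine ⟨((Finset.univ : Finset (Fin (N+1) → A)).image fun f => List.ofFn f).filter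
      (fun w => ¬ WordIn X w), ?_⟩
  ext x
  simp only [Set.mem_setOf_eq]
  constructor
  · intro hx w hw k hocc
    rw [Finset.mem_filter] at hw
    exact hw.2 ⟨x, hx, k, hocc⟩
  · intro hx
    have step1 : ∀ s : ℤ, WordIn X (seg x s (N + 1)) := by
      intro s
      by_contra hW
      have hmem : seg x s (N + 1) ∈ ((Finset.univ : Finset (Fin (N+1) → A)).image
          fun f => List.ofFn f).filter (fun w => ¬ WordIn X w) :=
        Finset.mem_filter.mpr ⟨Finset.mem_image.mpr ⟨fun i => x (s + i), Finset.mem_univ _, rfl⟩, hW⟩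
      exact hx _ hmem s (occursAt_seg_self x s (N + 1))
    have step2 : ∀ n : ℕ, WordIn X (seg x (-(n:ℤ)) (N + 1 + 2 * n)) := by
      intro n
      induction n with
      | zero => simpa using step1 0
      | succ n ih =>
        set L : ℕ := N + 1 + 2 * n with hL
        -- right extension
        have hright : WordIn X (seg x (-(n:ℤ)) (L + 1)) := by
          set s₁ : ℤ := -(n:ℤ) + ((L - N : ℕ) : ℤ) with hs₁
          have euv : seg x (-(n:ℤ)) (L - N) ++ seg x s₁ N = seg x (-(n:ℤ)) L := by
            rw [seg_append' x _ _ _ _ hs₁]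
            exact seg_len_congr x _ (by omega)
          have evw : seg x s₁ N ++ seg x (s₁ + (N:ℤ)) 1 = seg x s₁ (N + 1) := by
            rw [seg_append' x _ _ _ _ rfl]
          have h3 := hN (seg x (-(n:ℤ)) (L - N)) (seg x s₁ N) (seg x (s₁ + (N:ℤ)) 1)
            (by rw [euv]; exact ih) (by rw [evw]; exact step1 s₁) (by simp)
          rw [euv] at h3
          have efin : seg x (-(n:ℤ)) L ++ seg x (s₁ + (N:ℤ)) 1 = seg x (-(n:ℤ)) (L + 1) :=
            seg_append' x _ _ _ _ (by rw [hs₁]; push_cast; omega)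
          rwa [efin] at h3
        -- left extension
        set s₀ : ℤ := -(n:ℤ) - 1 with hs₀
        have hu'v' : seg x s₀ 1 ++ seg x (-(n:ℤ)) N = seg x s₀ (N + 1) := by
          rw [seg_append' x s₀ (-(n:ℤ)) 1 N (by rw [hs₀]; push_cast; ring)]
          exact seg_len_congr x _ (by omega)
        have hv'w' : seg x (-(n:ℤ)) N ++ seg x (-(n:ℤ) + (N:ℤ)) (L + 1 - N) =
            seg x (-(n:ℤ)) (L + 1) := by
          rw [seg_append' x _ _ _ _ rfl]
          exact seg_len_congr x _ (by omega)
        have h4 := hN (seg x s₀ 1) (seg x (-(n:ℤ)) N) (seg x (-(n:ℤ) + (N:ℤ)) (L + 1 - N))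
          (by rw [hu'v']; exact step1 s₀) (by rw [hv'w']; exact hright) (by simp)
        rw [hu'v'] at h4
        have efin2 : seg x s₀ (N + 1) ++ seg x (-(n:ℤ) + (N:ℤ)) (L + 1 - N) =
            seg x s₀ ((N + 1) + (L + 1 - N)) :=
          seg_append' x _ _ _ _ (by rw [hs₀]; push_cast; ring)
        rw [efin2] at h4
        have : seg x s₀ ((N + 1) + (L + 1 - N)) = seg x (-((n+1 : ℕ):ℤ)) (N + 1 + 2 * (n+1)) := by
          rw [seg_pos_congr x _ (show s₀ = -((n+1 : ℕ):ℤ) by rw [hs₀]; push_cast; ring)]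
          exact seg_len_congr x _ (by omega)
        rwa [this] at h4
    have step3 : ∀ n : ℕ, ∃ z, z ∈ X ∧ ∀ i : ℤ, -(n:ℤ) ≤ i → i ≤ n → z i = x i := by
      intro n
      obtain ⟨z, hzX, hzocc⟩ := exists_point_occursAt hX (step2 n) (-(n:ℤ))
      refine ⟨z, hzX, fun i h1 h2 => ?_⟩
      have hlt : (i + n).toNat < N + 1 + 2 * n := by omega
      have := occursAt_seg.mp hzocc _ hlt
      rwa [show -(n:ℤ) + ((i + n).toNat : ℤ) = i by omega] at this
    choose zf hzf hzfe using step3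
    have htend : Filter.Tendsto zf Filter.atTop (nhds x) := by
      rw [tendsto_pi_nhds]
      intro i
      have hev : ∀ᶠ n : ℕ in Filter.atTop, zf n i = x i := by
        rw [Filter.eventually_atTop]
        exact ⟨i.natAbs, fun n hn => hzfe n i (by omega) (by omega)⟩
      exact Filter.Tendsto.congr' (hev.mono fun n h => h.symm) tendsto_const_nhds
    exact hX.1.mem_of_tendsto htend (Filter.Eventually.of_forall hzf)

end Part4

end RCOAux
namespace RCOAux

open Set Filter Topology

section Part5

variable {A : Type*} {B : Type*} [TopologicalSpace A] [TopologicalSpace B]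
variable {X : Set (ℤ → A)} {Y : Set (ℤ → B)}
variable [Finite A] [DiscreteTopology A] [Finite B] [DiscreteTopology B]
variable {φ : X → Y}

lemma nonwander (hX : IsSubshift X) (hY : IsSubshift Y) (hφ : IsCode φ)
    (hrc : RightClosing φ) (hopen : IsOpenMap φ) (hYirr : IrreducibleSubshift Y) :
    NonwanderingSubshift X := by
  classical
  obtain ⟨M, hM⟩ := exists_closing_delay hX hφ hrc
  obtain ⟨K, hKM, hK⟩ := exists_open_radius hX hY hφ hopen M
  haveI : Fintype A := Fintype.ofFinite A
  set D : ℕ := Fintype.card (Fin (M + 1) → A) with hDdef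
  have hDpigeon : ∀ g : Fin (D + 1) → (Fin (M + 1) → A), ∃ j j', j ≠ j' ∧ g j = g j' := by
    intro g
    exact Fintype.exists_ne_map_eq_of_card_lt g (by rw [Fintype.card_fin]; omega)
  intro u hu
  obtain ⟨x, hx, hxu⟩ := exists_point_occursAt hX hu (1 - (u.length : ℤ))
  have hyY : Φ φ x hx ∈ Y := Φ_mem φ x hx
  set ℓ : ℤ := (u.length : ℤ) with hℓ
  set c₁ : ℤ := -(ℓ + K + M + 1) with hc₁
  set c₂ : ℤ := c₁ + 2*K + 2*M + 2*ℓ + 10 with hc₂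
  set La : ℤ := c₂ - c₁ + 1 with hLa
  have hℓ0 : 0 ≤ ℓ := by rw [hℓ]; positivity
  have copies : ∀ m : ℕ, ∃ yb, yb ∈ Y ∧ ∃ q : ℕ → ℤ,
      (∀ j, j < m + 1 → ∀ i, c₁ ≤ i → i ≤ c₂ → yb (q j + i) = Φ φ x hx i) ∧
      (∀ j j', j < j' → j' < m + 1 → q j + La ≤ q j') := by
    intro m
    induction m with
    | zero =>
        refine ⟨Φ φ x hx, hyY, fun _ => 0, ?_, ?_⟩
        · intro j hj i h1 h2
          rw [zero_add]
        · intro j j' h1 h2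
          omega
    | succ m ih =>
        obtain ⟨yb, hyb, q, hcopy, hmono⟩ := ih
        have hq0 : ∀ j, j < m + 1 → q 0 ≤ q j := by
          intro j hj
          rcases Nat.eq_zero_or_pos j with h | h
          · rw [h]
          · have := hmono 0 j h hj; omega
        set T : ℕ := (q m + c₂ - (q 0 + c₁) + 1).toNat with hT
        have hTval : (T : ℤ) = q m + c₂ - (q 0 + c₁) + 1 := by
          have := hq0 m (by omega); omega
        have hBin : WordIn Y (seg yb (q 0 + c₁) T) := ⟨yb, hyb, _, occursAt_seg_self _ _ _⟩
        have hain : WordIn Y (seg (Φ φ x hx) c₁ La.toNat) :=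
          ⟨Φ φ x hx, hyY, c₁, occursAt_seg_self _ _ _⟩
        obtain ⟨wf, hwf⟩ := hYirr _ _ hBin hain
        obtain ⟨z₀, hz₀, k, hk⟩ := hwf
        have hkBwf := (occursAt_append.mp hk).1
        have hka : OccursAt z₀ (k + ((seg yb (q 0 + c₁) T ++ wf).length : ℤ))
            (seg (Φ φ x hx) c₁ La.toNat) := (occursAt_append.mp hk).2
        have hkB : OccursAt z₀ k (seg yb (q 0 + c₁) T) := (occursAt_append.mp hkBwf).1
        set t₀ : ℤ := k - (q 0 + c₁) with ht₀
        set yb2 : ℤ → B := σt t₀ z₀ with hyb2def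
        have hyb2 : yb2 ∈ Y := mem_σt hY _ hz₀
        set qm : ℤ := q 0 + (T : ℤ) + (wf.length : ℤ) with hqm
        set q' : ℕ → ℤ := fun j => if j < m + 1 then q j else qm with hq'
        refine ⟨yb2, hyb2, q', ?_, ?_⟩
        · intro j hj i h1 h2
          by_cases hjm : j < m + 1
          · have e1 : q' j = q j := by simp only [hq']; rw [if_pos hjm]
            rw [e1, hyb2def, σt_apply]
            have hge : q 0 ≤ q j := hq0 j hjm
            have hle : q j ≤ q m := by
              rcases Nat.lt_or_ge j m with h | h
              · have := hmono j m h (by omega); omega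
              · have hjm' : j = m := by omega
                rw [hjm']
            have hmlt : (q j + i - (q 0 + c₁)).toNat < T := by omega
            have hB := occursAt_seg.mp hkB _ hmlt
            rw [show q j + i + t₀ = k + ((q j + i - (q 0 + c₁)).toNat : ℤ) by omega]
            rw [hB]
            rw [show q 0 + c₁ + ((q j + i - (q 0 + c₁)).toNat : ℤ) = q j + i by omega]
            exact hcopy j hjm i h1 h2
          · have e1 : q' j = qm := by simp only [hq']; rw [if_neg hjm]
            rw [e1, hyb2def, σt_apply]
            have hmlt : (i - c₁).toNat < La.toNat := by omega
            have ha := occursAt_seg.mp hka _ hmlt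
            rw [show qm + i + t₀ = (k + ((seg yb (q 0 + c₁) T ++ wf).length : ℤ))
                + ((i - c₁).toNat : ℤ) by
              simp only [List.length_append, length_seg]; push_cast; omega]
            rw [ha]
            rw [show c₁ + ((i - c₁).toNat : ℤ) = i by omega]
        · intro j j' h1 h2
          by_cases hj'm : j' < m + 1
          · have e1 : q' j = q j := by simp only [hq']; rw [if_pos (by omega : j < m + 1)]
            have e2 : q' j' = q j' := by simp only [hq']; rw [if_pos hj'm]
            rw [e1, e2]
            exact hmono j j' h1 hj'm
          · have e2 : q' j' = qm := by simp only [hq']; rw [if_neg hj'm]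
            have hjm : j < m + 1 := by omega
            have e1 : q' j = q j := by simp only [hq']; rw [if_pos hjm]
            rw [e1, e2, hqm]
            have hgap : q j ≤ q m := by
              rcases Nat.lt_or_ge j m with h | h
              · have := hmono j m h (by omega); omega
              · have hjm' : j = m := by omega
                rw [hjm']
            omega
  obtain ⟨yb, hyb, q, hcopy, hmono⟩ := copies D
  have lifts : ∀ j : Fin (D + 1), ∃ x', ∃ (hx' : x' ∈ X),
      Φ φ x' hx' = yb ∧ OccursAt x' (q j.1 + 1 - ℓ) u := by
    intro j
    have hxj : σt (-(q j.1)) x ∈ X := mem_σt hX _ hx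
    have himgsh : Φ φ (σt (-(q j.1)) x) hxj = σt (-(q j.1)) (Φ φ x hx) := Φ_σt hX hφ _ hx hxj
    have hjlt : j.1 < D + 1 := j.2
    have hcond : ∀ i, (q j.1 + c₁ + K) - K ≤ i → i ≤ (q j.1 + c₁ + K) + K →
        yb i = Φ φ (σt (-(q j.1)) x) hxj i := by
      intro i h1 h2
      rw [himgsh, σt_apply]
      have hc := hcopy j.1 hjlt (i - q j.1) (by omega) (by omega)
      rw [show q j.1 + (i - q j.1) = i by ring] at hc
      rw [hc]
      exact congrArg (Φ φ x hx) (by ring)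
    obtain ⟨x', hx', hagr, himg'⟩ := hK (σt (-(q j.1)) x) hxj yb hyb (q j.1 + c₁ + K) hcond
    have hprop := propagate M hM hx' hxj (q j.1 + c₁ + K) (q j.1 + c₂ - M)
      (fun i h1 h2 => hagr i (by omega) (by omega))
      (fun i h1 h2 => by
        rw [himg', himgsh, σt_apply]
        have hc := hcopy j.1 hjlt (i - q j.1) (by omega) (by omega)
        rw [show q j.1 + (i - q j.1) = i by ring] at hc
        rw [hc]
        exact congrArg (Φ φ x hx) (by ring))
    refine ⟨x', hx', himg', ?_⟩
    rw [occursAt_iff] at hxu ⊢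
    intro m hm
    have hm' : (m : ℤ) < ℓ := by rw [hℓ]; exact_mod_cast hm
    have e1 := hprop (q j.1 + 1 - ℓ + m) (by omega) (by omega)
    rw [e1, σt_apply, show q j.1 + 1 - ℓ + (m:ℤ) + -(q j.1) = 1 - ℓ + m by ring]
    exact hxu m hm
  choose xf hxf hxΦ hxocc using lifts
  have final : ∀ (j j' : Fin (D + 1)), j.1 < j'.1 → xf j = xf j' →
      ∃ w', WordIn X (u ++ w' ++ u) := by
    intro j j' hlt he
    have hgap : q j.1 + La ≤ q j'.1 := hmono j.1 j'.1 hlt j'.2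
    set p₁ : ℤ := q j.1 + 1 - ℓ with hp₁
    set p₂ : ℤ := q j'.1 + 1 - ℓ with hp₂
    have hocc1 : OccursAt (xf j) p₁ u := hxocc j
    have hocc2 : OccursAt (xf j) p₂ u := by rw [he]; exact hxocc j'
    refine ⟨seg (xf j) (p₁ + ℓ) ((p₂ - p₁ - ℓ).toNat), xf j, hxf j, p₁, ?_⟩
    apply occursAt_append.mpr
    constructor
    · apply occursAt_append.mpr
      refine ⟨hocc1, ?_⟩
      have hseg := occursAt_seg_self (xf j) (p₁ + ℓ) ((p₂ - p₁ - ℓ).toNat)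
      rwa [show p₁ + ℓ = p₁ + (u.length : ℤ) by rw [hℓ]] at hseg
    · have e : p₁ + ((u ++ seg (xf j) (p₁ + ℓ) ((p₂ - p₁ - ℓ).toNat)).length : ℤ) = p₂ := by
        simp only [List.length_append, length_seg]
        push_cast
        omega
      rw [e]
      exact hocc2
  obtain ⟨j, j', hne, he⟩ := fiber_bound M hM D hDpigeon xf hxf
    (fun a b => by rw [hxΦ a, hxΦ b])
  have hvne : j.1 ≠ j'.1 := fun hc => hne (Fin.ext hc)
  rcases lt_or_gt_of_ne hvne with h | h
  · exact final j j' h he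
  · exact final j' j h he.symm

end Part5

end RCOAux

theorem right_closing_open_ext_of_SFT {A : Type*} {B : Type*} [Finite A] [TopologicalSpace A] [DiscreteTopology A]
    [Finite B] [TopologicalSpace B] [DiscreteTopology B]
    {X : Set (ℤ → A)} {Y : Set (ℤ → B)} (hX : IsSubshift X) (hY : IsSubshift Y)
    (φ : X → Y) (hφ : IsCode φ)
    (hYsft : IsSFT Y) (hYirr : IrreducibleSubshift Y)
    (hrc : RightClosing φ) (hopen : IsOpenMap φ) :
    NonwanderingSubshift X ∧ IsSFT X := by
  constructor
  · exact RCOAux.nonwander hX hY hφ hrc hopen hYirr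
  · obtain ⟨N, hN⟩ := RCOAux.glueX hX hY hφ hrc hopen hYsft
    exact RCOAux.sft_of_glue hX N hN
end

section
/- Let φ be a code from a shift space X to an irreducible shift space Y. Then any two of the following conditions imply the third: (1) φ is open; (2) φ is constant-to-one; (3) φ is bi-closing. -/
open Set Function Filter

variable {A : Type*} {B : Type*} {C : Type*}

set_option linter.unusedSectionVars false

namespace TwoImplyThird

open Set Function Filter

/-- Shift by an arbitrary integer. -/
def shiftZ {A : Type*} (k : ℤ) (x : ℤ → A) : ℤ → A := fun i => x (i + k)

section basic
variable {A : Type*} {B : Type*}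

lemma shiftZ_apply (k : ℤ) (x : ℤ → A) (i : ℤ) : shiftZ k x i = x (i + k) := rfl

lemma shiftZ_shiftZ (k l : ℤ) (x : ℤ → A) : shiftZ k (shiftZ l x) = shiftZ (k + l) x := by
  funext i; simp [shiftZ, add_assoc]

lemma shiftZ_zero (x : ℤ → A) : shiftZ 0 x = x := by
  funext i; simp [shiftZ]

lemma shiftMap_eq_shiftZ (x : ℤ → A) : shiftMap x = shiftZ 1 x := rfl

lemma shiftZ_injective (k : ℤ) : Function.Injective (shiftZ (A := A) k) := by
  intro x y h
  have h2 := congrArg (shiftZ (-k)) h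
  rwa [shiftZ_shiftZ, shiftZ_shiftZ, neg_add_cancel, shiftZ_zero, shiftZ_zero] at h2

variable [TopologicalSpace A] {X : Set (ℤ → A)}

lemma shiftZ_mem (hX : IsSubshift X) (k : ℤ) {x : ℤ → A} (hx : x ∈ X) : shiftZ k x ∈ X := by
  induction k using Int.induction_on with
  | zero => rwa [shiftZ_zero]
  | succ n ih =>
      have h1 : shiftZ ((n : ℤ) + 1) x = shiftMap (shiftZ n x) := by
        funext i; simp [shiftMap, shiftZ]; ring_nf
      rw [h1, ← hX.2]
      exact Set.mem_image_of_mem shiftMap ih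
  | pred n ih =>
      have h1 : shiftZ (-(n : ℤ)) x ∈ X := ih
      rw [← hX.2] at h1
      obtain ⟨w, hw, hws⟩ := h1
      have h3 := congrArg (shiftZ (-1)) hws
      rw [shiftMap_eq_shiftZ, shiftZ_shiftZ, neg_add_cancel, shiftZ_zero, shiftZ_shiftZ] at h3
      rw [show (-(n:ℤ) - 1) = (-1 + -(n:ℤ)) by ring, ← h3]
      exact hw

/-- The shift as a self-map of the subshift. -/
def subShift (hX : IsSubshift X) (k : ℤ) (x : X) : X := ⟨shiftZ k x.1, shiftZ_mem hX k x.2⟩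

@[simp] lemma subShift_val (hX : IsSubshift X) (k : ℤ) (x : X) :
    (subShift hX k x : ℤ → A) = shiftZ k x.1 := rfl

lemma subShift_subShift (hX : IsSubshift X) (k l : ℤ) (x : X) :
    subShift hX k (subShift hX l x) = subShift hX (k + l) x :=
  Subtype.ext (shiftZ_shiftZ k l x.1)

lemma subShift_zero (hX : IsSubshift X) (x : X) : subShift hX 0 x = x :=
  Subtype.ext (shiftZ_zero x.1)

lemma subShift_injective (hX : IsSubshift X) (k : ℤ) :
    Function.Injective (subShift hX k) := by
  intro x y h
  exact Subtype.ext (shiftZ_injective k (congrArg Subtype.val h))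

lemma subShift_leftInverse (hX : IsSubshift X) (k : ℤ) (x : X) :
    subShift hX (-k) (subShift hX k x) = x := by
  rw [subShift_subShift, neg_add_cancel, subShift_zero]

end basic

section code
variable {A : Type*} {B : Type*} [TopologicalSpace A] [TopologicalSpace B]
variable {X : Set (ℤ → A)} {Y : Set (ℤ → B)}

lemma code_subShift (hX : IsSubshift X) (hY : IsSubshift Y) {φ : X → Y} (hφ : IsCode φ)
    (k : ℤ) (x : X) : φ (subShift hX k x) = subShift hY k (φ x) := by
  have base : ∀ x : X, φ (subShift hX 1 x) = subShift hY 1 (φ x) := by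
    intro x
    have h := hφ.2 x (shiftZ_mem hX 1 x.2)
    exact Subtype.ext h
  have baseneg : ∀ x : X, φ (subShift hX (-1) x) = subShift hY (-1) (φ x) := by
    intro x
    have h1 : subShift hX 1 (subShift hX (-1) x) = x := by
      rw [subShift_subShift]; norm_num; exact subShift_zero hX x
    have h2 := base (subShift hX (-1) x)
    rw [h1] at h2
    have h3 := congrArg (subShift hY (-1)) h2
    rw [subShift_subShift] at h3
    norm_num at h3
    rw [subShift_zero] at h3
    exact h3.symm
  induction k using Int.induction_on with
  | zero => rw [subShift_zero, subShift_zero]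
  | succ n ih =>
      have : subShift hX ((n : ℤ) + 1) x = subShift hX 1 (subShift hX n x) := by
        rw [subShift_subShift]; ring_nf
      rw [this, base, ih, subShift_subShift]; ring_nf
  | pred n ih =>
      rw [show (-(n:ℤ) - 1) = (-1 + -(n:ℤ)) by ring, ← subShift_subShift, ← subShift_subShift,
        baseneg, ih]

end code


section agree
variable {A : Type*} {B : Type*}

/-- Agreement on the centered window of radius `m`. -/
def AgreeOn (x y : ℤ → A) (m : ℕ) : Prop := ∀ i : ℤ, |i| ≤ (m : ℤ) → x i = y i

lemma agreeOn_refl (x : ℤ → A) (m : ℕ) : AgreeOn x x m := fun _ _ => rfl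

lemma AgreeOn.symm {x y : ℤ → A} {m : ℕ} (h : AgreeOn x y m) : AgreeOn y x m :=
  fun i hi => (h i hi).symm

lemma AgreeOn.trans {x y z : ℤ → A} {m : ℕ} (h : AgreeOn x y m) (h' : AgreeOn y z m) :
    AgreeOn x z m := fun i hi => (h i hi).trans (h' i hi)

lemma AgreeOn.mono {x y : ℤ → A} {m m' : ℕ} (h : AgreeOn x y m) (hm : m' ≤ m) :
    AgreeOn x y m' := fun i hi => h i (le_trans hi (by exact_mod_cast hm))

variable [TopologicalSpace A] [DiscreteTopology A]

lemma cylinder_isOpen (y : ℤ → A) (m : ℕ) : IsOpen {x : ℤ → A | AgreeOn x y m} := by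
  have h : {x : ℤ → A | AgreeOn x y m}
      = ⋂ i ∈ Finset.Icc (-(m : ℤ)) (m : ℤ), {x : ℤ → A | x i = y i} := by
    ext x
    simp only [Set.mem_setOf_eq, Set.mem_iInter, Finset.mem_Icc, AgreeOn]
    constructor
    · intro hx i hi; exact hx i (abs_le.2 hi)
    · intro hx i hi; exact hx i (abs_le.1 hi)
  rw [h]
  refine isOpen_biInter_finset fun i _ => ?_
  have h2 : {x : ℤ → A | x i = y i} = (fun x : ℤ → A => x i) ⁻¹' {y i} := by
    ext x; simp
  rw [h2]
  exact (isOpen_discrete _).preimage (continuous_apply i)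

lemma exists_cylinder_subset {U : Set (ℤ → A)} (hU : IsOpen U) {x : ℤ → A} (hx : x ∈ U) :
    ∃ m : ℕ, ∀ z, AgreeOn z x m → z ∈ U := by
  obtain ⟨I, u, hu, hsub⟩ := isOpen_pi_iff.1 hU x hx
  refine ⟨I.sup Int.natAbs, fun z hz => hsub ?_⟩
  intro i hi
  have hi' : i ∈ I := hi
  have h1 : i.natAbs ≤ I.sup Int.natAbs := Finset.le_sup hi'
  have h2 : z i = x i := by
    refine hz i ?_
    rw [Int.abs_eq_natAbs]
    exact_mod_cast h1
  rw [h2]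
  exact (hu i hi').2

variable {X : Set (ℤ → A)}

lemma cylinder_isOpen' (y : ℤ → A) (m : ℕ) : IsOpen {x : X | AgreeOn x.1 y m} :=
  (cylinder_isOpen y m).preimage continuous_subtype_val

lemma exists_cylinder_subset' {S : Set X} (hS : IsOpen S) {x : X} (hx : x ∈ S) :
    ∃ m : ℕ, ∀ z : X, AgreeOn z.1 x.1 m → z ∈ S := by
  obtain ⟨V, hV, rfl⟩ := isOpen_induced_iff.1 hS
  obtain ⟨m, hm⟩ := exists_cylinder_subset hV hx
  exact ⟨m, fun z hz => hm _ hz⟩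

lemma tendsto_iff_eventually_agree {u : ℕ → ℤ → A} {x : ℤ → A} :
    Filter.Tendsto u Filter.atTop (nhds x) ↔ ∀ i, ∀ᶠ n in Filter.atTop, u n i = x i := by
  rw [tendsto_pi_nhds]
  refine forall_congr' fun i => ?_
  rw [nhds_discrete, tendsto_pure]

lemma eventually_agreeOn {u : ℕ → ℤ → A} {x : ℤ → A}
    (h : Filter.Tendsto u Filter.atTop (nhds x)) (m : ℕ) :
    ∀ᶠ n in Filter.atTop, AgreeOn (u n) x m := by
  have h' := tendsto_iff_eventually_agree.1 h
  have h2 : ∀ᶠ n in Filter.atTop, ∀ i ∈ Finset.Icc (-(m : ℤ)) (m : ℤ), u n i = x i :=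
    (Filter.eventually_all_finset _).2 fun i _ => h' i
  exact h2.mono fun n hn i hi => hn i (Finset.mem_Icc.2 (abs_le.1 hi))

lemma tendsto_of_agree {u : ℕ → ℤ → A} {x : ℤ → A} (h : ∀ n, AgreeOn (u n) x n) :
    Filter.Tendsto u Filter.atTop (nhds x) := by
  rw [tendsto_iff_eventually_agree]
  intro i
  filter_upwards [Filter.eventually_ge_atTop i.natAbs] with n hn
  refine h n i ?_
  rw [Int.abs_eq_natAbs]
  exact_mod_cast hn

variable [Finite A]

lemma exists_subseq (hX : IsSubshift X) (u : ℕ → X) :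
    ∃ (x : X) (s : ℕ → ℕ), StrictMono s ∧
      Filter.Tendsto (fun n => (u (s n)).1) Filter.atTop (nhds x.1) := by
  have hc : IsCompact X := hX.1.isCompact
  obtain ⟨a, ha, s, hs, hconv⟩ := hc.tendsto_subseq (x := fun n => (u n).1) (fun n => (u n).2)
  exact ⟨⟨a, ha⟩, s, hs, hconv⟩

end agree

section codetop
variable {A : Type*} {B : Type*} [TopologicalSpace A] [TopologicalSpace B]
variable {X : Set (ℤ → A)} {Y : Set (ℤ → B)}

lemma tendsto_code {φ : X → Y} (hφ : IsCode φ) {u : ℕ → X} {x : X}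
    (h : Filter.Tendsto (fun n => (u n).1) Filter.atTop (nhds x.1)) :
    Filter.Tendsto (fun n => (φ (u n)).1) Filter.atTop (nhds (φ x).1) := by
  have h1 : Filter.Tendsto u Filter.atTop (nhds x) := tendsto_subtype_rng.2 h
  exact tendsto_subtype_rng.1 ((hφ.1.tendsto x).comp h1)

end codetop


section closing
variable {A : Type*} {B : Type*} [Finite A] [TopologicalSpace A] [DiscreteTopology A]
  [Finite B] [TopologicalSpace B] [DiscreteTopology B]
variable {X : Set (ℤ → A)} {Y : Set (ℤ → B)}

lemma limit_pair (hX : IsSubshift X) (hY : IsSubshift Y) {φ : X → Y} (hφ : IsCode φ)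
    (u u' : ℕ → X) (P : ℤ → Prop) (hphi : ∀ n, φ (u n) = φ (u' n))
    (hne0 : ∀ n, (u n).1 0 ≠ (u' n).1 0)
    (hagr : ∀ i : ℤ, P i → ∀ᶠ n in Filter.atTop, (u n).1 i = (u' n).1 i) :
    ∃ a a' : X, φ a = φ a' ∧ a.1 0 ≠ a'.1 0 ∧ ∀ i, P i → a.1 i = a'.1 i := by
  obtain ⟨a, s1, hs1, h1⟩ := exists_subseq hX u
  obtain ⟨a', s2, hs2, h2⟩ := exists_subseq hX (fun n => u' (s1 n))
  have hv : StrictMono (fun n => s1 (s2 n)) := hs1.comp hs2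
  have h1' : Filter.Tendsto (fun n => (u (s1 (s2 n))).1) Filter.atTop (nhds a.1) :=
    h1.comp hs2.tendsto_atTop
  have h2' : Filter.Tendsto (fun n => (u' (s1 (s2 n))).1) Filter.atTop (nhds a'.1) := h2
  have hA := tendsto_code hφ (u := fun n => u (s1 (s2 n))) h1'
  have hB := tendsto_code hφ (u := fun n => u' (s1 (s2 n))) h2'
  have heqf : (fun n => (φ (u (s1 (s2 n)))).1) = fun n => (φ (u' (s1 (s2 n)))).1 :=
    funext fun n => congrArg Subtype.val (hphi (s1 (s2 n)))
  rw [heqf] at hA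
  have hval : (φ a).1 = (φ a').1 := tendsto_nhds_unique hA hB
  refine ⟨a, a', Subtype.ext hval, ?_, ?_⟩
  · have e1 := (tendsto_iff_eventually_agree.1 h1') 0
    have e2 := (tendsto_iff_eventually_agree.1 h2') 0
    obtain ⟨n, hn1, hn2⟩ := (e1.and e2).exists
    rw [← hn1, ← hn2]
    exact hne0 (s1 (s2 n))
  · intro i hPi
    have e1 := (tendsto_iff_eventually_agree.1 h1') i
    have e2 := (tendsto_iff_eventually_agree.1 h2') i
    have e3 : ∀ᶠ n in Filter.atTop, (u (s1 (s2 n))).1 i = (u' (s1 (s2 n))).1 i :=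
      hv.tendsto_atTop.eventually (hagr i hPi)
    obtain ⟨n, hn1, hn2, hn3⟩ := (e1.and (e2.and e3)).exists
    rw [← hn1, ← hn2]
    exact hn3

lemma uniform_biclosing (hX : IsSubshift X) (hY : IsSubshift Y) {φ : X → Y} (hφ : IsCode φ)
    (hbc : BiClosing φ) :
    ∃ N : ℕ, ∀ x x' : X, φ x = φ x' → AgreeOn x.1 x'.1 N → x = x' := by
  by_contra hcon
  push_neg at hcon
  choose xs xs' hphi hagree hne using hcon
  have hdis : ∀ n, ∃ i : ℤ, (xs n).1 i ≠ (xs' n).1 i := by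
    intro n
    by_contra h
    push_neg at h
    exact hne n (Subtype.ext (funext h))
  have hcases : (∃ᶠ n : ℕ in Filter.atTop, ∃ i : ℤ, (n : ℤ) < i ∧ (xs n).1 i ≠ (xs' n).1 i) ∨
      (∃ᶠ n : ℕ in Filter.atTop, ∃ i : ℤ, i < -(n : ℤ) ∧ (xs n).1 i ≠ (xs' n).1 i) := by
    by_contra h
    push_neg at h
    obtain ⟨h1, h2⟩ := h
    obtain ⟨n, hn1, hn2⟩ := (h1.and h2).exists
    obtain ⟨i, hi⟩ := hdis n
    rcases le_or_gt i ((n : ℤ)) with hle | hgt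
    · rcases le_or_gt (-(n : ℤ)) i with hle2 | hlt2
      · exact hi (hagree n i (abs_le.2 ⟨hle2, hle⟩))
      · exact hi (hn2 i hlt2)
    · exact hi (hn1 i hgt)
  rcases hcases with hca | hcb
  · obtain ⟨g, hg, hgP⟩ := extraction_of_frequently_atTop hca
    have hleast : ∀ n, ∃ c : ℤ, ((g n : ℤ) < c ∧ (xs (g n)).1 c ≠ (xs' (g n)).1 c) ∧
        ∀ z : ℤ, ((g n : ℤ) < z ∧ (xs (g n)).1 z ≠ (xs' (g n)).1 z) → c ≤ z :=
      fun n => Int.exists_least_of_bdd ⟨(g n : ℤ), fun z hz => le_of_lt hz.1⟩ (hgP n)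
    choose c hc hcmin using hleast
    have hphi' : ∀ n, φ (subShift hX (c n) (xs (g n))) = φ (subShift hX (c n) (xs' (g n))) := by
      intro n
      rw [code_subShift hX hY hφ, code_subShift hX hY hφ, hphi (g n)]
    have hne0 : ∀ n, (subShift hX (c n) (xs (g n))).1 0 ≠ (subShift hX (c n) (xs' (g n))).1 0 := by
      intro n
      simp only [subShift_val, shiftZ_apply, zero_add]
      exact (hc n).2
    have hagr : ∀ i : ℤ, i < 0 → ∀ᶠ n in Filter.atTop,
        (subShift hX (c n) (xs (g n))).1 i = (subShift hX (c n) (xs' (g n))).1 i := by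
      intro i hi
      filter_upwards [Filter.eventually_ge_atTop i.natAbs] with n hn
      have hgn : n ≤ g n := hg.le_apply
      have hcgt : (g n : ℤ) < c n := (hc n).1
      simp only [subShift_val, shiftZ_apply]
      rcases le_or_gt (i + c n) ((g n : ℤ)) with hle | hgt
      · exact hagree (g n) _ (abs_le.2 ⟨by omega, hle⟩)
      · by_contra hne2
        have := hcmin n (i + c n) ⟨hgt, hne2⟩
        omega
    obtain ⟨a, a', hphia, hne0', hagr'⟩ := limit_pair hX hY hφ _ _ (fun i => i < 0) hphi' hne0 hagr
    have : a = a' := hbc.1 a a' ⟨-1, fun i hi => hagr' i (by omega)⟩ hphia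
    exact hne0' (by rw [this])
  · obtain ⟨g, hg, hgP⟩ := extraction_of_frequently_atTop hcb
    have hgreat : ∀ n, ∃ c : ℤ, (c < -(g n : ℤ) ∧ (xs (g n)).1 c ≠ (xs' (g n)).1 c) ∧
        ∀ z : ℤ, (z < -(g n : ℤ) ∧ (xs (g n)).1 z ≠ (xs' (g n)).1 z) → z ≤ c :=
      fun n => Int.exists_greatest_of_bdd ⟨-(g n : ℤ), fun z hz => le_of_lt hz.1⟩ (hgP n)
    choose c hc hcmax using hgreat
    have hphi' : ∀ n, φ (subShift hX (c n) (xs (g n))) = φ (subShift hX (c n) (xs' (g n))) := by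
      intro n
      rw [code_subShift hX hY hφ, code_subShift hX hY hφ, hphi (g n)]
    have hne0 : ∀ n, (subShift hX (c n) (xs (g n))).1 0 ≠ (subShift hX (c n) (xs' (g n))).1 0 := by
      intro n
      simp only [subShift_val, shiftZ_apply, zero_add]
      exact (hc n).2
    have hagr : ∀ i : ℤ, 0 < i → ∀ᶠ n in Filter.atTop,
        (subShift hX (c n) (xs (g n))).1 i = (subShift hX (c n) (xs' (g n))).1 i := by
      intro i hi
      filter_upwards [Filter.eventually_ge_atTop i.natAbs] with n hn
      have hgn : n ≤ g n := hg.le_apply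
      have hclt : c n < -(g n : ℤ) := (hc n).1
      simp only [subShift_val, shiftZ_apply]
      rcases le_or_gt (-(g n : ℤ)) (i + c n) with hle | hlt
      · exact hagree (g n) _ (abs_le.2 ⟨hle, by omega⟩)
      · by_contra hne2
        have := hcmax n (i + c n) ⟨hlt, hne2⟩
        omega
    obtain ⟨a, a', hphia, hne0', hagr'⟩ := limit_pair hX hY hφ _ _ (fun i => 0 < i) hphi' hne0 hagr
    have : a = a' := hbc.2 a a' ⟨1, fun i hi => hagr' i (by omega)⟩ hphia
    exact hne0' (by rw [this])

lemma fiber_finite {φ : X → Y} {N : ℕ}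
    (hsep : ∀ x x' : X, φ x = φ x' → AgreeOn x.1 x'.1 N → x = x') (y : Y) :
    (φ ⁻¹' {y}).Finite := by
  have hinj : Function.Injective
      (fun z : (φ ⁻¹' {y} : Set X) => (fun i : Finset.Icc (-(N : ℤ)) (N : ℤ) => z.1.1 i.1)) := by
    intro z z' h
    have hag : AgreeOn z.1.1 z'.1.1 N := by
      intro i hi
      have hmem : i ∈ Finset.Icc (-(N : ℤ)) (N : ℤ) := Finset.mem_Icc.2 (abs_le.1 hi)
      exact congrFun h ⟨i, hmem⟩
    have hphi : φ z.1 = φ z'.1 := (show φ z.1 = y from z.2).trans (show φ z'.1 = y from z'.2).symm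
    exact Subtype.ext (hsep z.1 z'.1 hphi hag)
  have : Finite (φ ⁻¹' {y} : Set X) := Finite.of_injective _ hinj
  exact Set.toFinite _

lemma exists_sep_radius {S : Set X} (hS : S.Finite) :
    ∃ m : ℕ, ∀ z z' : X, z ∈ S → z' ∈ S → AgreeOn z.1 z'.1 m → z = z' := by
  classical
  refine ⟨hS.toFinset.sup (fun z => hS.toFinset.sup (fun z' =>
    if h : z.1 = z'.1 then 0 else (Classical.choose (Function.ne_iff.1 h)).natAbs)), ?_⟩
  intro z z' hz hz' hag
  by_contra hne
  have hne' : z.1 ≠ z'.1 := fun h => hne (Subtype.ext h)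
  have hispec : z.1 (Classical.choose (Function.ne_iff.1 hne'))
      ≠ z'.1 (Classical.choose (Function.ne_iff.1 hne')) :=
    Classical.choose_spec (Function.ne_iff.1 hne')
  refine hispec (hag _ ?_)
  rw [Int.abs_eq_natAbs]
  have h1 : (if h : z.1 = z'.1 then 0 else (Classical.choose (Function.ne_iff.1 h)).natAbs)
      ≤ hS.toFinset.sup (fun z' =>
        if h : z.1 = z'.1 then 0 else (Classical.choose (Function.ne_iff.1 h)).natAbs) :=
    Finset.le_sup (f := fun z' =>
      if h : z.1 = z'.1 then 0 else (Classical.choose (Function.ne_iff.1 h)).natAbs)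
      (hS.mem_toFinset.2 hz')
  have h2 : hS.toFinset.sup (fun z' =>
        if h : z.1 = z'.1 then 0 else (Classical.choose (Function.ne_iff.1 h)).natAbs)
      ≤ hS.toFinset.sup (fun z => hS.toFinset.sup (fun z' =>
        if h : z.1 = z'.1 then 0 else (Classical.choose (Function.ne_iff.1 h)).natAbs)) :=
    Finset.le_sup (f := fun z => hS.toFinset.sup (fun z' =>
        if h : z.1 = z'.1 then 0 else (Classical.choose (Function.ne_iff.1 h)).natAbs))
      (hS.mem_toFinset.2 hz)
  rw [dif_neg hne'] at h1
  exact_mod_cast le_trans h1 h2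

lemma open_lift {φ : X → Y} (hopen : IsOpenMap φ) (y : Y) (hfib : (φ ⁻¹' {y}).Finite) (m : ℕ) :
    ∃ M : ℕ, ∀ y' : Y, AgreeOn y'.1 y.1 M → ∀ z ∈ φ ⁻¹' {y},
      ∃ x' : X, φ x' = y' ∧ AgreeOn x'.1 z.1 m := by
  have hVopen : IsOpen (⋂ z ∈ φ ⁻¹' {y}, φ '' {x : X | AgreeOn x.1 z.1 m}) :=
    hfib.isOpen_biInter fun z _ => hopen _ (cylinder_isOpen' z.1 m)
  have hyV : y ∈ ⋂ z ∈ φ ⁻¹' {y}, φ '' {x : X | AgreeOn x.1 z.1 m} :=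
    Set.mem_iInter₂.2 fun z hz => ⟨z, agreeOn_refl z.1 m, hz⟩
  obtain ⟨M, hM⟩ := exists_cylinder_subset' hVopen hyV
  refine ⟨M, fun y' hy' z hz => ?_⟩
  obtain ⟨x', hx'cyl, hx'im⟩ := Set.mem_iInter₂.1 (hM y' hy') z hz
  exact ⟨x', hx'im, hx'cyl⟩

lemma fiber_upper (hX : IsSubshift X) {φ : X → Y} (hφ : IsCode φ) (y : Y) (m : ℕ) :
    ∃ M : ℕ, ∀ y' : Y, AgreeOn y'.1 y.1 M → ∀ z : X, φ z = y' →
      ∃ w : X, φ w = y ∧ AgreeOn z.1 w.1 m := by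
  by_contra hcon
  push_neg at hcon
  choose ys hagree zs hz hbad using hcon
  obtain ⟨w, s, hs, hconv⟩ := exists_subseq hX zs
  have hys : Filter.Tendsto (fun n => (ys n).1) Filter.atTop (nhds y.1) :=
    tendsto_of_agree fun n => hagree n
  have hys' : Filter.Tendsto (fun n => (ys (s n)).1) Filter.atTop (nhds y.1) :=
    hys.comp hs.tendsto_atTop
  have hphiw : Filter.Tendsto (fun n => (φ (zs (s n))).1) Filter.atTop (nhds (φ w).1) :=
    tendsto_code hφ hconv
  have heq : (fun n => (φ (zs (s n))).1) = fun n => (ys (s n)).1 :=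
    funext fun n => congrArg Subtype.val (hz (s n))
  rw [heq] at hphiw
  have hw : φ w = y := Subtype.ext (tendsto_nhds_unique hphiw hys')
  obtain ⟨n, hn⟩ := (eventually_agreeOn hconv m).exists
  exact hbad (s n) w hw hn

end closing


section directions
variable {A : Type*} {B : Type*} [Finite A] [TopologicalSpace A] [DiscreteTopology A]
  [Finite B] [TopologicalSpace B] [DiscreteTopology B]
variable {X : Set (ℤ → A)} {Y : Set (ℤ → B)}

lemma mem_fiber_iff {φ : X → Y} {z : X} {y : Y} : z ∈ φ ⁻¹' {y} ↔ φ z = y := by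
  simp [Set.mem_preimage]

lemma dir1_core (hX : IsSubshift X) (hY : IsSubshift Y) {φ : X → Y} (hφ : IsCode φ)
    (hopen : IsOpenMap φ) (hc21 : ConstantToOne φ)
    {x x' : X} (hne : x ≠ x') (hphi : φ x = φ x') (k : ℕ → ℤ)
    (hagr : ∀ n, AgreeOn (shiftZ (k n) x.1) (shiftZ (k n) x'.1) n) : False := by
  obtain ⟨d, hd⟩ := hc21
  have hpphi : ∀ n, φ (subShift hX (k n) x) = φ (subShift hX (k n) x') := fun n => by
    rw [code_subShift hX hY hφ, code_subShift hX hY hφ, hphi]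
  have hpne : ∀ n, subShift hX (k n) x ≠ subShift hX (k n) x' :=
    fun n h => hne (subShift_injective hX (k n) h)
  obtain ⟨uu, s1, hs1, h1⟩ := exists_subseq hX (fun n => subShift hX (k n) x)
  have h2 : Filter.Tendsto (fun n => (subShift hX (k (s1 n)) x').1) Filter.atTop (nhds uu.1) := by
    rw [tendsto_iff_eventually_agree] at h1 ⊢
    intro i
    have hev : ∀ᶠ n in Filter.atTop,
        (subShift hX (k n) x').1 i = (subShift hX (k n) x).1 i := by
      filter_upwards [Filter.eventually_ge_atTop i.natAbs] with n hn
      exact (hagr n i (by rw [Int.abs_eq_natAbs]; exact_mod_cast hn)).symm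
    exact ((hs1.tendsto_atTop.eventually hev).and (h1 i)).mono fun n hn => hn.1.trans hn.2
  have hfibfin : (φ ⁻¹' {φ uu}).Finite := (hd (φ uu)).1
  obtain ⟨m, hm⟩ := exists_sep_radius hfibfin
  obtain ⟨M, hM⟩ := open_lift hopen (φ uu) hfibfin m
  have hyconv : Filter.Tendsto (fun n => (φ (subShift hX (k (s1 n)) x)).1) Filter.atTop
      (nhds (φ uu).1) := tendsto_code hφ h1
  have e1 := eventually_agreeOn hyconv M
  have e2 := eventually_agreeOn h1 m
  have e3 := eventually_agreeOn h2 m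
  obtain ⟨n, hn1, hn2, hn3⟩ := (e1.and (e2.and e3)).exists
  choose lift hl1 hl2 using hM (φ (subShift hX (k (s1 n)) x)) hn1
  have hfinY' : Finite (φ ⁻¹' {φ (subShift hX (k (s1 n)) x)} : Set X) :=
    ((hd _).1).to_subtype
  set L : (φ ⁻¹' {φ uu} : Set X) → (φ ⁻¹' {φ (subShift hX (k (s1 n)) x)} : Set X) :=
    fun z => ⟨lift z.1 z.2, mem_fiber_iff.2 (hl1 z.1 z.2)⟩ with hL
  have hLinj : Function.Injective L := by
    intro z₁ z₂ h
    have hv : lift z₁.1 z₁.2 = lift z₂.1 z₂.2 := congrArg Subtype.val h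
    have hag : AgreeOn z₁.1.1 z₂.1.1 m :=
      ((hl2 z₁.1 z₁.2).symm.trans (hv ▸ hl2 z₂.1 z₂.2))
    exact Subtype.ext (hm z₁.1 z₂.1 z₁.2 z₂.2 hag)
  have hLbij : Function.Bijective L := by
    rw [Nat.bijective_iff_injective_and_card]
    exact ⟨hLinj, ((hd _).2).trans ((hd _).2).symm⟩
  have huniq : ∀ p : X, φ p = φ (subShift hX (k (s1 n)) x) → AgreeOn p.1 uu.1 m →
      p = lift uu (mem_fiber_iff.2 rfl) := by
    intro p hp hpag
    obtain ⟨z, hz⟩ := hLbij.2 ⟨p, mem_fiber_iff.2 hp⟩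
    have hv : lift z.1 z.2 = p := congrArg Subtype.val hz
    have hag1 : AgreeOn p.1 z.1.1 m := hv ▸ hl2 z.1 z.2
    have hzu : z = (⟨uu, mem_fiber_iff.2 rfl⟩ : (φ ⁻¹' {φ uu} : Set X)) :=
      Subtype.ext (hm z.1 uu z.2 (mem_fiber_iff.2 rfl) (hag1.symm.trans hpag))
    rw [← hv, hzu]
  have hp1 := huniq (subShift hX (k (s1 n)) x) rfl hn2
  have hp2 := huniq (subShift hX (k (s1 n)) x') (hpphi (s1 n)).symm hn3
  exact hpne (s1 n) (hp1.trans hp2.symm)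

lemma dir1 (hX : IsSubshift X) (hY : IsSubshift Y) {φ : X → Y} (hφ : IsCode φ)
    (hopen : IsOpenMap φ) (hc21 : ConstantToOne φ) : BiClosing φ := by
  constructor
  · intro x x' hasym hphi
    by_contra hne
    obtain ⟨N₀, hN₀⟩ := hasym
    refine dir1_core hX hY hφ hopen hc21 hne hphi (fun n => N₀ - n) ?_
    intro n i hi
    rw [shiftZ_apply, shiftZ_apply]
    refine hN₀ _ ?_
    show i + (N₀ - (n : ℤ)) ≤ N₀
    have := abs_le.1 hi
    omega
  · intro x x' hasym hphi
    by_contra hne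
    obtain ⟨N₀, hN₀⟩ := hasym
    refine dir1_core hX hY hφ hopen hc21 hne hphi (fun n => N₀ + n) ?_
    intro n i hi
    rw [shiftZ_apply, shiftZ_apply]
    refine hN₀ _ ?_
    show N₀ ≤ i + (N₀ + (n : ℤ))
    have := abs_le.1 hi
    omega

lemma dir3 (hX : IsSubshift X) (hY : IsSubshift Y) {φ : X → Y} (hφ : IsCode φ)
    (hc21 : ConstantToOne φ) (hbc : BiClosing φ) : IsOpenMap φ := by
  obtain ⟨d, hd⟩ := hc21
  obtain ⟨N, hN⟩ := uniform_biclosing hX hY hφ hbc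
  intro U hU
  rw [isOpen_iff_forall_mem_open]
  rintro y ⟨x, hxU, rfl⟩
  obtain ⟨m₀, hm₀⟩ := exists_cylinder_subset' hU hxU
  obtain ⟨M, hM⟩ := fiber_upper hX hφ (φ x) (max m₀ N)
  refine ⟨{y' : Y | AgreeOn y'.1 (φ x).1 M}, ?_, cylinder_isOpen' _ M, agreeOn_refl _ M⟩
  intro y' hy'
  choose w hw1 hw2 using hM y' hy'
  have hfin' : Finite (φ ⁻¹' {φ x} : Set X) := ((hd (φ x)).1).to_subtype
  set L : (φ ⁻¹' {y'} : Set X) → (φ ⁻¹' {φ x} : Set X) :=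
    fun z => ⟨w z.1 (mem_fiber_iff.1 z.2), mem_fiber_iff.2 (hw1 z.1 (mem_fiber_iff.1 z.2))⟩
    with hL
  have hLinj : Function.Injective L := by
    intro z₁ z₂ h
    have hv : w z₁.1 (mem_fiber_iff.1 z₁.2) = w z₂.1 (mem_fiber_iff.1 z₂.2) :=
      congrArg Subtype.val h
    have hag : AgreeOn z₁.1.1 z₂.1.1 (max m₀ N) :=
      (hw2 z₁.1 (mem_fiber_iff.1 z₁.2)).trans (hv ▸ (hw2 z₂.1 (mem_fiber_iff.1 z₂.2)).symm)
    have hphi12 : φ z₁.1 = φ z₂.1 :=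
      (mem_fiber_iff.1 z₁.2).trans (mem_fiber_iff.1 z₂.2).symm
    exact Subtype.ext (hN z₁.1 z₂.1 hphi12 (hag.mono (le_max_right m₀ N)))
  have hLbij : Function.Bijective L := by
    rw [Nat.bijective_iff_injective_and_card]
    exact ⟨hLinj, ((hd _).2).trans ((hd _).2).symm⟩
  obtain ⟨z, hz⟩ := hLbij.2 ⟨x, mem_fiber_iff.2 rfl⟩
  have hv : w z.1 (mem_fiber_iff.1 z.2) = x := congrArg Subtype.val hz
  have hag : AgreeOn z.1.1 x.1 (max m₀ N) := hv ▸ hw2 z.1 (mem_fiber_iff.1 z.2)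
  exact ⟨z.1, hm₀ z.1 (hag.mono (le_max_left m₀ N)), mem_fiber_iff.1 z.2⟩

end directions


section dirtwo
variable {A : Type*} {B : Type*} [Finite A] [TopologicalSpace A] [DiscreteTopology A]
  [Finite B] [TopologicalSpace B] [DiscreteTopology B]
variable {X : Set (ℤ → A)} {Y : Set (ℤ → B)}

lemma occursAt_getElem {x : ℤ → B} {k : ℤ} {w : List B} (h : OccursAt x k w)
    (j : ℕ) (hj : j < w.length) : x (k + (j : ℤ)) = w[j] := by
  simpa using h ⟨j, hj⟩

lemma const_of_irreducible (hY : IsSubshift Y) (hirr : IrreducibleSubshift Y)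
    (c : Y → ℕ)
    (hloc : ∀ y : Y, ∃ M : ℕ, ∀ y' : Y, AgreeOn y'.1 y.1 M → c y' = c y)
    (hshift : ∀ (k : ℤ) (y : Y), c (subShift hY k y) = c y)
    (y₁ y₂ : Y) : c y₁ = c y₂ := by
  obtain ⟨M₁, hM₁⟩ := hloc y₁
  obtain ⟨M₂, hM₂⟩ := hloc y₂
  set u : List B := List.ofFn (fun t : Fin (2*M₁+1) => y₁.1 (-(M₁:ℤ) + (t : ℕ))) with hu
  set v : List B := List.ofFn (fun t : Fin (2*M₂+1) => y₂.1 (-(M₂:ℤ) + (t : ℕ))) with hv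
  have hulen : u.length = 2*M₁+1 := by rw [hu, List.length_ofFn]
  have hvlen : v.length = 2*M₂+1 := by rw [hv, List.length_ofFn]
  have huget : ∀ (j : ℕ) (hj : j < u.length), u[j] = y₁.1 (-(M₁:ℤ) + (j : ℤ)) := by
    intro j hj
    simp only [hu, List.getElem_ofFn]
  have hvget : ∀ (j : ℕ) (hj : j < v.length), v[j] = y₂.1 (-(M₂:ℤ) + (j : ℤ)) := by
    intro j hj
    simp only [hv, List.getElem_ofFn]
  have hword1 : WordIn Y u := by
    refine ⟨y₁.1, y₁.2, -(M₁:ℤ), fun t => ?_⟩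
    rw [List.get_eq_getElem, huget t.1 t.2]
  have hword2 : WordIn Y v := by
    refine ⟨y₂.1, y₂.2, -(M₂:ℤ), fun t => ?_⟩
    rw [List.get_eq_getElem, hvget t.1 t.2]
  obtain ⟨w, z, hz, k, hocc⟩ := hirr u v hword1 hword2
  have hlen : (u ++ w ++ v).length = u.length + w.length + v.length := by
    simp [Nat.add_assoc]
  have hz1 : c (subShift hY (k + M₁) ⟨z, hz⟩) = c y₁ := by
    apply hM₁
    intro i hi
    have hi' := abs_le.1 hi
    rw [subShift_val, shiftZ_apply]
    show z (i + (k + (M₁:ℤ))) = y₁.1 i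
    have hjnn : (0:ℤ) ≤ i + M₁ := by omega
    have hjz : (((i + (M₁:ℤ)).toNat : ℕ) : ℤ) = i + M₁ := Int.toNat_of_nonneg hjnn
    have hjlt : (i + (M₁:ℤ)).toNat < (u ++ w ++ v).length := by rw [hlen]; omega
    have ho := occursAt_getElem hocc _ hjlt
    have hju : (i + (M₁:ℤ)).toNat < u.length := by omega
    have hjuw : (i + (M₁:ℤ)).toNat < (u ++ w).length := by
      rw [List.length_append]; omega
    rw [List.getElem_append_left hjuw, List.getElem_append_left hju, huget _ hju] at ho
    have e1 : i + (k + (M₁:ℤ)) = k + (((i + (M₁:ℤ)).toNat : ℕ) : ℤ) := by omega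
    have e2 : -(M₁:ℤ) + (((i + (M₁:ℤ)).toNat : ℕ) : ℤ) = i := by omega
    rw [e1, ho, e2]
  have hz2 : c (subShift hY (k + (u.length : ℤ) + (w.length : ℤ) + M₂) ⟨z, hz⟩) = c y₂ := by
    apply hM₂
    intro i hi
    have hi' := abs_le.1 hi
    rw [subShift_val, shiftZ_apply]
    show z (i + (k + (u.length : ℤ) + (w.length : ℤ) + (M₂:ℤ))) = y₂.1 i
    have hjnn : (0:ℤ) ≤ i + M₂ := by omega
    have hjz : (((i + (M₂:ℤ)).toNat : ℕ) : ℤ) = i + M₂ := Int.toNat_of_nonneg hjnn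
    have hjlt : u.length + w.length + (i + (M₂:ℤ)).toNat < (u ++ w ++ v).length := by
      rw [hlen]; omega
    have ho := occursAt_getElem hocc _ hjlt
    have hluw : (u ++ w).length = u.length + w.length := List.length_append
    have hge : (u ++ w).length ≤ u.length + w.length + (i + (M₂:ℤ)).toNat := by omega
    rw [List.getElem_append_right hge] at ho
    simp only [hluw, Nat.add_sub_cancel_left] at ho
    rw [hvget _ (by omega)] at ho
    have e1 : i + (k + (u.length : ℤ) + (w.length : ℤ) + (M₂:ℤ))
        = k + ((u.length + w.length + (i + (M₂:ℤ)).toNat : ℕ) : ℤ) := by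
      push_cast
      omega
    have e2 : -(M₂:ℤ) + (((i + (M₂:ℤ)).toNat : ℕ) : ℤ) = i := by omega
    rw [e1, ho, e2]
  calc c y₁ = c (subShift hY (k + M₁) ⟨z, hz⟩) := hz1.symm
    _ = c ⟨z, hz⟩ := hshift _ _
    _ = c (subShift hY (k + (u.length : ℤ) + (w.length : ℤ) + M₂) ⟨z, hz⟩) :=
        (hshift _ _).symm
    _ = c y₂ := hz2

lemma dir2 (hX : IsSubshift X) (hY : IsSubshift Y) {φ : X → Y} (hφ : IsCode φ)
    (hYirr : IrreducibleSubshift Y) (hopen : IsOpenMap φ) (hbc : BiClosing φ) :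
    ConstantToOne φ := by
  obtain ⟨N, hN⟩ := uniform_biclosing hX hY hφ hbc
  have hfin : ∀ y : Y, (φ ⁻¹' {y}).Finite := fiber_finite hN
  have hloc : ∀ y : Y, ∃ M : ℕ, ∀ y' : Y, AgreeOn y'.1 y.1 M →
      Nat.card (φ ⁻¹' {y'} : Set X) = Nat.card (φ ⁻¹' {y} : Set X) := by
    intro y
    by_cases hemp : (φ ⁻¹' {y} : Set X).Nonempty
    · obtain ⟨M₁, hM₁⟩ := open_lift hopen y (hfin y) N
      obtain ⟨M₂, hM₂⟩ := fiber_upper hX hφ y N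
      refine ⟨max M₁ M₂, fun y' hy' => ?_⟩
      have hfy : Finite (φ ⁻¹' {y} : Set X) := (hfin y).to_subtype
      have hfy' : Finite (φ ⁻¹' {y'} : Set X) := (hfin y').to_subtype
      have h1 : Nat.card (φ ⁻¹' {y} : Set X) ≤ Nat.card (φ ⁻¹' {y'} : Set X) := by
        choose lift hl1 hl2 using hM₁ y' (hy'.mono (le_max_left _ _))
        refine Nat.card_le_card_of_injective
          (fun z : (φ ⁻¹' {y} : Set X) =>
            (⟨lift z.1 z.2, mem_fiber_iff.2 (hl1 z.1 z.2)⟩ : (φ ⁻¹' {y'} : Set X))) ?_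
        intro z₁ z₂ h
        have hv : lift z₁.1 z₁.2 = lift z₂.1 z₂.2 := congrArg Subtype.val h
        have hag : AgreeOn z₁.1.1 z₂.1.1 N :=
          (hl2 z₁.1 z₁.2).symm.trans (hv ▸ hl2 z₂.1 z₂.2)
        have hp : φ z₁.1 = φ z₂.1 :=
          (mem_fiber_iff.1 z₁.2).trans (mem_fiber_iff.1 z₂.2).symm
        exact Subtype.ext (hN z₁.1 z₂.1 hp hag)
      have h2 : Nat.card (φ ⁻¹' {y'} : Set X) ≤ Nat.card (φ ⁻¹' {y} : Set X) := by
        choose w hw1 hw2 using hM₂ y' (hy'.mono (le_max_right _ _))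
        refine Nat.card_le_card_of_injective
          (fun z : (φ ⁻¹' {y'} : Set X) =>
            (⟨w z.1 (mem_fiber_iff.1 z.2),
              mem_fiber_iff.2 (hw1 z.1 (mem_fiber_iff.1 z.2))⟩ : (φ ⁻¹' {y} : Set X))) ?_
        intro z₁ z₂ h
        have hv : w z₁.1 (mem_fiber_iff.1 z₁.2) = w z₂.1 (mem_fiber_iff.1 z₂.2) :=
          congrArg Subtype.val h
        have hag : AgreeOn z₁.1.1 z₂.1.1 N :=
          (hw2 z₁.1 (mem_fiber_iff.1 z₁.2)).trans
            (hv ▸ (hw2 z₂.1 (mem_fiber_iff.1 z₂.2)).symm)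
        have hp : φ z₁.1 = φ z₂.1 :=
          (mem_fiber_iff.1 z₁.2).trans (mem_fiber_iff.1 z₂.2).symm
        exact Subtype.ext (hN z₁.1 z₂.1 hp hag)
      exact le_antisymm h2 h1
    · haveI : CompactSpace (X : Set (ℤ → A)) := isCompact_iff_compactSpace.1 hX.1.isCompact
      have hrange : IsClosed (Set.range φ) := (isCompact_range hφ.1).isClosed
      have hymem : y ∈ (Set.range φ)ᶜ := by
        rintro ⟨x, hx⟩
        exact hemp ⟨x, mem_fiber_iff.2 hx⟩
      obtain ⟨M, hM⟩ := exists_cylinder_subset' hrange.isOpen_compl hymem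
      refine ⟨M, fun y' hy' => ?_⟩
      have h1 : (φ ⁻¹' {y'} : Set X) = ∅ := by
        rw [Set.eq_empty_iff_forall_notMem]
        intro p hp
        exact (hM y' hy') ⟨p, mem_fiber_iff.1 hp⟩
      have h2 : (φ ⁻¹' {y} : Set X) = ∅ := Set.not_nonempty_iff_eq_empty.1 hemp
      rw [h1, h2]
  have hshift : ∀ (k : ℤ) (y : Y),
      Nat.card (φ ⁻¹' {subShift hY k y} : Set X) = Nat.card (φ ⁻¹' {y} : Set X) := by
    intro k y
    refine Nat.card_congr ⟨fun z => ⟨subShift hX (-k) z.1, ?_⟩,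
      fun z => ⟨subShift hX k z.1, ?_⟩, ?_, ?_⟩
    · apply mem_fiber_iff.2
      rw [code_subShift hX hY hφ, mem_fiber_iff.1 z.2, subShift_subShift,
        neg_add_cancel, subShift_zero]
    · apply mem_fiber_iff.2
      rw [code_subShift hX hY hφ, mem_fiber_iff.1 z.2]
    · intro z
      apply Subtype.ext
      show subShift hX k (subShift hX (-k) z.1) = z.1
      rw [subShift_subShift, add_neg_cancel, subShift_zero]
    · intro z
      apply Subtype.ext
      show subShift hX (-k) (subShift hX k z.1) = z.1
      rw [subShift_subShift, neg_add_cancel, subShift_zero]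
  rcases isEmpty_or_nonempty Y with hYe | hYne
  · exact ⟨0, fun y => (hYe.false y).elim⟩
  · obtain ⟨y₀⟩ := hYne
    exact ⟨Nat.card (φ ⁻¹' {y₀} : Set X), fun y =>
      ⟨hfin y, const_of_irreducible hY hYirr _ hloc hshift y y₀⟩⟩

end dirtwo

end TwoImplyThird


theorem main_two_imply_third_general {A : Type*} {B : Type*} [Finite A] [TopologicalSpace A] [DiscreteTopology A]
    [Finite B] [TopologicalSpace B] [DiscreteTopology B]
    {X : Set (ℤ → A)} {Y : Set (ℤ → B)} (hX : IsSubshift X) (hY : IsSubshift Y)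
    (φ : X → Y) (hφ : IsCode φ)
    (hYirr : IrreducibleSubshift Y) :
    (IsOpenMap φ → ConstantToOne φ → BiClosing φ) ∧
    (IsOpenMap φ → BiClosing φ → ConstantToOne φ) ∧
    (ConstantToOne φ → BiClosing φ → IsOpenMap φ) := by
  exact ⟨fun hopen hc21 => TwoImplyThird.dir1 hX hY hφ hopen hc21,
    fun hopen hbc => TwoImplyThird.dir2 hX hY hφ hYirr hopen hbc,
    fun hc21 hbc => TwoImplyThird.dir3 hX hY hφ hc21 hbc⟩
end

section
/- Let φ : X → Y be a d-to-1 code between shift spaces (every fiber has exactly d points). Then the following are equivalent: (1) φ is open; (2) φ is bi-closing; (3) φ has d disjoint continuous cross sections f₁,…,f_d : Y → X with X equal to the union of their images; (4) for every x ∈ X there exists a continuous cross section f : Y → X with x ∈ f(Y). -/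
open Set Function Filter

variable {A : Type*} {B : Type*} {C : Type*}

section DToOneHelpers

/-! ### Infrastructure for the d-to-one TFAE theorem -/

/-- Translation by `k`. -/
def trShift (k : ℤ) (x : ℤ → A) : ℤ → A := fun i => x (i + k)

lemma trShift_trShift (j k : ℤ) (x : ℤ → A) :
    trShift j (trShift k x) = trShift (j + k) x := by
  funext i; simp [trShift, add_assoc]

lemma trShift_zero (x : ℤ → A) : trShift 0 x = x := by
  funext i; simp [trShift]

lemma trShift_injective (k : ℤ) : Function.Injective (trShift (A := A) k) := by
  intro x y h
  funext i
  have := congrFun h (i - k)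
  simpa [trShift, sub_add_cancel] using this

lemma shiftMap_eq_trShift (x : ℤ → A) : shiftMap x = trShift 1 x := rfl

/-- Agreement on the window `[-n, n]`. -/
def agreeOn (n : ℕ) (x x' : ℤ → A) : Prop := ∀ i : ℤ, |i| ≤ (n : ℤ) → x i = x' i

lemma agreeOn.symm {n : ℕ} {x x' : ℤ → A} (h : agreeOn n x x') : agreeOn n x' x :=
  fun i hi => (h i hi).symm

lemma agreeOn.refl (n : ℕ) (x : ℤ → A) : agreeOn n x x := fun _ _ => rfl

lemma agreeOn.trans {n : ℕ} {x y z : ℤ → A} (h : agreeOn n x y) (h' : agreeOn n y z) :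
    agreeOn n x z := fun i hi => (h i hi).trans (h' i hi)

variable [TopologicalSpace A] [DiscreteTopology A]

lemma subshift_mem_trShift {X : Set (ℤ → A)} (hX : IsSubshift X) (k : ℤ) {x : ℤ → A}
    (hx : x ∈ X) : trShift k x ∈ X := by
  induction k using Int.induction_on with
  | zero => rwa [trShift_zero]
  | succ i ih =>
      have h : shiftMap (trShift (i : ℤ) x) ∈ X := by
        rw [← hX.2]; exact Set.mem_image_of_mem _ ih
      rw [shiftMap_eq_trShift, trShift_trShift] at h
      have e : (1 + (i : ℤ)) = (i : ℤ) + 1 := by ring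
      rwa [e] at h
  | pred i ih =>
      have h := ih
      rw [← hX.2] at h
      obtain ⟨w, hw, hweq⟩ := h
      have hwx : w = trShift (-(i : ℤ) - 1) x := by
        funext m
        have h1 := congrFun hweq (m - 1)
        simp only [shiftMap, trShift, sub_add_cancel] at h1
        exact h1.trans (congrArg x (by ring))
      rwa [hwx] at hw

variable [Finite A]

/-- Cylinder sets are a neighborhood basis. -/
lemma exists_cyl_subset {S : Set (ℤ → A)} (hS : IsOpen S) {z : ℤ → A} (hz : z ∈ S) :
    ∃ n : ℕ, ∀ w, agreeOn n w z → w ∈ S := by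
  obtain ⟨I, u, hIu, hsub⟩ := isOpen_pi_iff.mp hS z hz
  refine ⟨I.sup fun i => i.natAbs, fun w hw => hsub fun i hi => ?_⟩
  have hi' : i ∈ I := hi
  have habs : |i| ≤ ((I.sup fun i => i.natAbs : ℕ) : ℤ) := by
    rw [Int.abs_eq_natAbs]
    exact_mod_cast Finset.le_sup (f := fun i : ℤ => i.natAbs) hi'
  rw [hw i habs]
  exact (hIu i hi').2

/-- Cylinders in a subshift are clopen. -/
lemma isClopen_cyl (X : Set (ℤ → A)) (c : ℤ → A) (n : ℕ) :
    IsClopen {x : X | agreeOn n (x : ℤ → A) c} := by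
  have he : {x : X | agreeOn n (x : ℤ → A) c}
      = Subtype.val ⁻¹' (⋂ i ∈ Finset.Icc (-(n : ℤ)) (n : ℤ), {w : ℤ → A | w i = c i}) := by
    ext x
    simp only [Set.mem_setOf_eq, Set.mem_preimage, Set.mem_iInter, Finset.mem_Icc]
    exact ⟨fun h i hi => h i (abs_le.mpr hi), fun h i hi => h i (abs_le.mp hi)⟩
  rw [he]
  refine IsClopen.preimage ?_ continuous_subtype_val
  refine isClopen_biInter_finset fun i _ => ?_
  exact (isClopen_discrete {c i}).preimage (continuous_apply i)

/-- Any continuous map from a subshift to a discrete space depends only on a finite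
window of coordinates. -/
lemma exists_window {X : Set (ℤ → A)} (hX : IsClosed X) {β : Type*} [TopologicalSpace β]
    [DiscreteTopology β] (g : X → β) (hg : Continuous g) :
    ∃ n : ℕ, ∀ x x' : X, agreeOn n (x : ℤ → A) (x' : ℤ → A) → g x = g x' := by
  have hcomp : CompactSpace X := isCompact_iff_compactSpace.mp hX.isCompact
  have key : ∀ x : X, ∃ n : ℕ, ∀ x' : X, agreeOn n (x' : ℤ → A) (x : ℤ → A) → g x' = g x := by
    intro x
    have hopen : IsOpen (g ⁻¹' {g x}) := (isOpen_discrete _).preimage hg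
    obtain ⟨S, hS, hpre⟩ := isOpen_induced_iff.mp hopen
    have hxS : (x : ℤ → A) ∈ S := by
      have : x ∈ Subtype.val ⁻¹' S := by rw [hpre]; exact rfl
      exact this
    obtain ⟨n, hn⟩ := exists_cyl_subset hS hxS
    refine ⟨n, fun x' hagr => ?_⟩
    have : x' ∈ Subtype.val ⁻¹' S := hn _ hagr
    rw [hpre] at this
    exact this
  choose nn hnn using key
  have hcov : (Set.univ : Set X) ⊆ ⋃ x : X, {x' : X | agreeOn (nn x) (x' : ℤ → A) (x : ℤ → A)} :=
    fun x _ => Set.mem_iUnion.mpr ⟨x, agreeOn.refl _ _⟩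
  obtain ⟨t, ht⟩ := isCompact_univ.elim_finite_subcover _
    (fun x : X => (isClopen_cyl X (x : ℤ → A) (nn x)).isOpen) hcov
  refine ⟨t.sup nn, fun x x' hagree => ?_⟩
  have hx : x ∈ ⋃ x₀ ∈ t, {x' : X | agreeOn (nn x₀) (x' : ℤ → A) (x₀ : ℤ → A)} :=
    ht (Set.mem_univ x)
  simp only [Set.mem_iUnion, Set.mem_setOf_eq] at hx
  obtain ⟨x₀, hx₀t, hx₀⟩ := hx
  have hb : ((nn x₀ : ℕ) : ℤ) ≤ ((t.sup nn : ℕ) : ℤ) := by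
    exact_mod_cast Finset.le_sup hx₀t
  have hagr' : agreeOn (nn x₀) (x' : ℤ → A) (x₀ : ℤ → A) := by
    intro i hi
    rw [← hagree i (le_trans hi hb)]
    exact hx₀ i hi
  rw [hnn x₀ x hx₀, hnn x₀ x' hagr']

lemma eventually_agreeOn {u : ℕ → (ℤ → A)} {z : ℤ → A}
    (h : Filter.Tendsto u Filter.atTop (nhds z)) (n : ℕ) :
    ∀ᶠ k in Filter.atTop, agreeOn n (u k) z := by
  have h1 : ∀ i : ℤ, ∀ᶠ k in Filter.atTop, u k i = z i := by
    intro i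
    have h2 := tendsto_pi_nhds.mp h i
    rw [nhds_discrete A] at h2
    exact tendsto_pure.mp h2
  have h3 : ∀ᶠ k in Filter.atTop, ∀ i ∈ Finset.Icc (-(n : ℤ)) (n : ℤ), u k i = z i :=
    (Filter.eventually_all_finset _).mpr fun i _ => h1 i
  exact h3.mono fun k hk i hi => hk i (Finset.mem_Icc.mpr (abs_le.mp hi))

end DToOneHelpers

section DToOneMain

variable [Finite A] [TopologicalSpace A] [DiscreteTopology A]
  [Finite B] [TopologicalSpace B] [DiscreteTopology B]
  {X : Set (ℤ → A)} {Y : Set (ℤ → B)}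

/-- The translation action on the subshift. -/
def Strans (hX : IsSubshift X) (k : ℤ) (x : X) : X :=
  ⟨trShift k (x : ℤ → A), subshift_mem_trShift hX k x.2⟩

lemma Strans_Strans (hX : IsSubshift X) (j k : ℤ) (x : X) :
    Strans hX j (Strans hX k x) = Strans hX (j + k) x :=
  Subtype.ext (trShift_trShift j k _)

lemma Strans_zero (hX : IsSubshift X) (x : X) : Strans hX 0 x = x :=
  Subtype.ext (trShift_zero _)

lemma Strans_injective (hX : IsSubshift X) (k : ℤ) : Function.Injective (Strans hX k) := by
  intro x y h
  exact Subtype.ext (trShift_injective k (congrArg Subtype.val h))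

/-- A code commutes with all powers of the shift. -/
lemma code_commute (hX : IsSubshift X) (hY : IsSubshift Y) {φ : X → Y} (hφ : IsCode φ)
    (k : ℤ) (x : X) : φ (Strans hX k x) = Strans hY k (φ x) := by
  have step : ∀ z : X, φ (Strans hX 1 z) = Strans hY 1 (φ z) := by
    intro z
    exact Subtype.ext (hφ.2 z (Strans hX 1 z).2)
  induction k using Int.induction_on with
  | zero => rw [Strans_zero, Strans_zero]
  | succ i ih =>
      have e1 : Strans hX ((i : ℤ) + 1) x = Strans hX 1 (Strans hX (i : ℤ) x) := by
        rw [Strans_Strans]; congr 1; ring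
      rw [e1, step, ih, Strans_Strans]
      congr 1; ring
  | pred i ih =>
      have e1 : Strans hX 1 (Strans hX (-(i : ℤ) - 1) x) = Strans hX (-(i : ℤ)) x := by
        rw [Strans_Strans]; congr 1; ring
      have e2 := step (Strans hX (-(i : ℤ) - 1) x)
      rw [e1, ih] at e2
      have e3 := congrArg (Strans hY (-1)) e2
      rw [Strans_Strans, Strans_Strans, show (-1 + 1 : ℤ) = 0 from by ring, Strans_zero] at e3
      rw [← e3]; congr 1; ring

/-- Uniform bi-closing: a bi-closing code admits a uniform closing window. -/
lemma uniform_closing (hX : IsSubshift X) (hY : IsSubshift Y) {φ : X → Y} (hφ : IsCode φ)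
    (hbc : BiClosing φ) :
    ∃ n : ℕ, ∀ x x' : X, agreeOn n (x : ℤ → A) (x' : ℤ → A) → φ x = φ x' → x = x' := by
  by_contra hcon
  push_neg at hcon
  choose xs xs' h1 h2 h3 using hcon
  have hXcomp : CompactSpace X := isCompact_iff_compactSpace.mp hX.1.isCompact
  have hYT2 : T2Space Y := inferInstance
  have hdis : ∀ n : ℕ, ∃ m : ℤ, (xs n : ℤ → A) m ≠ (xs' n : ℤ → A) m := by
    intro n
    by_contra hc
    push_neg at hc
    exact h3 n (Subtype.ext (funext hc))
  -- The generic one-sided argument, parameterized by a sign `s = 1` or `s = -1`.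
  -- We do the two cases by hand.
  by_cases hpos : ∀ J : ℕ, ∃ n, J ≤ n ∧ ∃ m : ℤ, 0 < m ∧ (xs n : ℤ → A) m ≠ (xs' n : ℤ → A) m
  · -- disagreements arbitrarily far to the right: contradict right closing
    have hsel : ∀ J : ℕ, ∃ (nn : ℕ) (p : ℤ), J ≤ nn ∧ 0 < p ∧
        (xs nn : ℤ → A) p ≠ (xs' nn : ℤ → A) p ∧
        (∀ m : ℤ, 0 < m → m < p → (xs nn : ℤ → A) m = (xs' nn : ℤ → A) m) := by
      intro J
      obtain ⟨n, hnJ, m, hm0, hmne⟩ := hpos J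
      obtain ⟨p, ⟨hp0, hpne⟩, hpmin⟩ := Int.exists_least_of_bdd
        (P := fun z => 0 < z ∧ (xs n : ℤ → A) z ≠ (xs' n : ℤ → A) z)
        ⟨0, fun z hz => le_of_lt hz.1⟩ ⟨m, hm0, hmne⟩
      refine ⟨n, p, hnJ, hp0, hpne, fun m' hm'0 hm'p => ?_⟩
      by_contra hne
      exact absurd (hpmin m' ⟨hm'0, hne⟩) (not_le.mpr hm'p)
    choose nJ pp hJle hp0 hpne hpmin using hsel
    have hpgt : ∀ J, (nJ J : ℤ) < pp J := by
      intro J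
      by_contra hle
      push_neg at hle
      exact hpne J (h1 (nJ J) _ (abs_le.mpr ⟨by have := hp0 J; omega, hle⟩))
    have hagr : ∀ J : ℕ, ∀ i : ℤ, -(J : ℤ) ≤ i → i < pp J →
        (xs (nJ J) : ℤ → A) i = (xs' (nJ J) : ℤ → A) i := by
      intro J i hiJ hip
      rcases le_or_gt i (nJ J : ℤ) with h | h
      · refine h1 (nJ J) i (abs_le.mpr ⟨?_, h⟩)
        have := hJle J; omega
      · refine hpmin J i ?_ hip
        have : (0 : ℤ) ≤ (nJ J : ℤ) := Int.natCast_nonneg _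
        omega
    set zs : ℕ → X × X :=
      fun J => (Strans hX (pp J) (xs (nJ J)), Strans hX (pp J) (xs' (nJ J))) with hzs
    obtain ⟨⟨z, z'⟩, -, ψ, hψ, hten⟩ :=
      isCompact_univ.tendsto_subseq (fun J => Set.mem_univ (zs J))
    have hten1 : Filter.Tendsto (fun k => (zs (ψ k)).1) Filter.atTop (nhds z) :=
      (continuous_fst.tendsto _).comp hten
    have hten2 : Filter.Tendsto (fun k => (zs (ψ k)).2) Filter.atTop (nhds z') :=
      (continuous_snd.tendsto _).comp hten
    have hc1 : ∀ i : ℤ, ∀ᶠ k in Filter.atTop, ((zs (ψ k)).1 : ℤ → A) i = (z : ℤ → A) i := by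
      intro i
      have h := tendsto_pi_nhds.mp (tendsto_subtype_rng.mp hten1) i
      rw [nhds_discrete A] at h
      exact tendsto_pure.mp h
    have hc2 : ∀ i : ℤ, ∀ᶠ k in Filter.atTop, ((zs (ψ k)).2 : ℤ → A) i = (z' : ℤ → A) i := by
      intro i
      have h := tendsto_pi_nhds.mp (tendsto_subtype_rng.mp hten2) i
      rw [nhds_discrete A] at h
      exact tendsto_pure.mp h
    have hzagr : ∀ i : ℤ, i < 0 → (z : ℤ → A) i = (z' : ℤ → A) i := by
      intro i hi
      have hev : ∀ᶠ k in Filter.atTop,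
          ((zs (ψ k)).1 : ℤ → A) i = ((zs (ψ k)).2 : ℤ → A) i := by
        filter_upwards [Filter.eventually_ge_atTop i.natAbs] with k hk
        show (xs (nJ (ψ k)) : ℤ → A) (i + pp (ψ k)) = (xs' (nJ (ψ k)) : ℤ → A) (i + pp (ψ k))
        apply hagr (ψ k)
        · have e1 := hpgt (ψ k)
          have e2 := hJle (ψ k)
          have e3 : k ≤ ψ k := hψ.le_apply
          have e4 : (i.natAbs : ℤ) ≤ (k : ℤ) := Int.ofNat_le.mpr hk
          have e5 : -(i.natAbs : ℤ) ≤ i := by have h1 := Int.abs_eq_natAbs i; have h2 := neg_abs_le i; omega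
          omega
        · omega
      obtain ⟨k, hk1, hk2, hk12⟩ := ((hc1 i).and ((hev).and (hc2 i))).exists
      rw [← hk1, hk2, hk12]
    have hz0 : (z : ℤ → A) 0 ≠ (z' : ℤ → A) 0 := by
      intro heq
      obtain ⟨k, hk1, hk2⟩ := ((hc1 0).and (hc2 0)).exists
      apply hpne (ψ k)
      have h := hk1.trans (heq.trans hk2.symm)
      have h' : (xs (nJ (ψ k)) : ℤ → A) (0 + pp (ψ k))
          = (xs' (nJ (ψ k)) : ℤ → A) (0 + pp (ψ k)) := h
      simpa using h'
    have hφz : φ z = φ z' := by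
      have e1 : Filter.Tendsto (fun k => φ ((zs (ψ k)).1)) Filter.atTop (nhds (φ z)) :=
        (hφ.1.tendsto _).comp hten1
      have e2 : Filter.Tendsto (fun k => φ ((zs (ψ k)).2)) Filter.atTop (nhds (φ z')) :=
        (hφ.1.tendsto _).comp hten2
      have eeq : (fun k => φ ((zs (ψ k)).1)) = fun k => φ ((zs (ψ k)).2) := by
        funext k
        show φ (Strans hX (pp (ψ k)) (xs (nJ (ψ k)))) = φ (Strans hX (pp (ψ k)) (xs' (nJ (ψ k))))
        rw [code_commute hX hY hφ, code_commute hX hY hφ, h2]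
      rw [eeq] at e1
      exact tendsto_nhds_unique e1 e2
    have hzz : z = z' := hbc.1 z z' ⟨-1, fun i hi => hzagr i (by omega)⟩ hφz
    exact hz0 (by rw [hzz])
  · -- disagreements arbitrarily far to the left: contradict left closing
    push_neg at hpos
    obtain ⟨J₀, hJ₀⟩ := hpos
    have hneg : ∀ J : ℕ, ∃ n, J ≤ n ∧ ∃ m : ℤ, m < 0 ∧
        (xs n : ℤ → A) m ≠ (xs' n : ℤ → A) m := by
      intro J
      obtain ⟨m, hm⟩ := hdis (max J J₀)
      refine ⟨max J J₀, le_max_left _ _, m, ?_, hm⟩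
      rcases lt_trichotomy m 0 with h | h | h
      · exact h
      · exfalso; apply hm; subst h; exact h1 _ 0 (by simp)
      · exfalso; exact hm (hJ₀ _ (le_max_right _ _) m h)
    have hsel : ∀ J : ℕ, ∃ (nn : ℕ) (p : ℤ), J ≤ nn ∧ p < 0 ∧
        (xs nn : ℤ → A) p ≠ (xs' nn : ℤ → A) p ∧
        (∀ m : ℤ, p < m → m < 0 → (xs nn : ℤ → A) m = (xs' nn : ℤ → A) m) := by
      intro J
      obtain ⟨n, hnJ, m, hm0, hmne⟩ := hneg J
      obtain ⟨p, ⟨hp0, hpne⟩, hpmax⟩ := Int.exists_greatest_of_bdd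
        (P := fun z => z < 0 ∧ (xs n : ℤ → A) z ≠ (xs' n : ℤ → A) z)
        ⟨0, fun z hz => le_of_lt hz.1⟩ ⟨m, hm0, hmne⟩
      refine ⟨n, p, hnJ, hp0, hpne, fun m' hm'p hm'0 => ?_⟩
      by_contra hne
      exact absurd (hpmax m' ⟨hm'0, hne⟩) (not_le.mpr hm'p)
    choose nJ pp hJle hp0 hpne hpmax using hsel
    have hpgt : ∀ J, pp J < -(nJ J : ℤ) := by
      intro J
      by_contra hle
      push_neg at hle
      exact hpne J (h1 (nJ J) _ (abs_le.mpr ⟨hle, by have := hp0 J; omega⟩))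
    have hagr : ∀ J : ℕ, ∀ i : ℤ, pp J < i → i ≤ (J : ℤ) →
        (xs (nJ J) : ℤ → A) i = (xs' (nJ J) : ℤ → A) i := by
      intro J i hip hiJ
      rcases lt_or_ge i 0 with h | h
      · exact hpmax J i hip h
      · refine h1 (nJ J) i (abs_le.mpr ⟨?_, ?_⟩) <;> [skip; skip] <;>
          · have := hJle J; omega
    set zs : ℕ → X × X :=
      fun J => (Strans hX (pp J) (xs (nJ J)), Strans hX (pp J) (xs' (nJ J))) with hzs
    obtain ⟨⟨z, z'⟩, -, ψ, hψ, hten⟩ :=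
      isCompact_univ.tendsto_subseq (fun J => Set.mem_univ (zs J))
    have hten1 : Filter.Tendsto (fun k => (zs (ψ k)).1) Filter.atTop (nhds z) :=
      (continuous_fst.tendsto _).comp hten
    have hten2 : Filter.Tendsto (fun k => (zs (ψ k)).2) Filter.atTop (nhds z') :=
      (continuous_snd.tendsto _).comp hten
    have hc1 : ∀ i : ℤ, ∀ᶠ k in Filter.atTop, ((zs (ψ k)).1 : ℤ → A) i = (z : ℤ → A) i := by
      intro i
      have h := tendsto_pi_nhds.mp (tendsto_subtype_rng.mp hten1) i
      rw [nhds_discrete A] at h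
      exact tendsto_pure.mp h
    have hc2 : ∀ i : ℤ, ∀ᶠ k in Filter.atTop, ((zs (ψ k)).2 : ℤ → A) i = (z' : ℤ → A) i := by
      intro i
      have h := tendsto_pi_nhds.mp (tendsto_subtype_rng.mp hten2) i
      rw [nhds_discrete A] at h
      exact tendsto_pure.mp h
    have hzagr : ∀ i : ℤ, 0 < i → (z : ℤ → A) i = (z' : ℤ → A) i := by
      intro i hi
      have hev : ∀ᶠ k in Filter.atTop,
          ((zs (ψ k)).1 : ℤ → A) i = ((zs (ψ k)).2 : ℤ → A) i := by
        filter_upwards [Filter.eventually_ge_atTop i.natAbs] with k hk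
        show (xs (nJ (ψ k)) : ℤ → A) (i + pp (ψ k)) = (xs' (nJ (ψ k)) : ℤ → A) (i + pp (ψ k))
        apply hagr (ψ k)
        · omega
        · have e1 := hpgt (ψ k)
          have e2 := hJle (ψ k)
          have e3 : k ≤ ψ k := hψ.le_apply
          have e4 : (i.natAbs : ℤ) ≤ (k : ℤ) := Int.ofNat_le.mpr hk
          have e5 : i ≤ (i.natAbs : ℤ) := Int.le_natAbs
          omega
      obtain ⟨k, hk1, hk2, hk12⟩ := ((hc1 i).and ((hev).and (hc2 i))).exists
      rw [← hk1, hk2, hk12]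
    have hz0 : (z : ℤ → A) 0 ≠ (z' : ℤ → A) 0 := by
      intro heq
      obtain ⟨k, hk1, hk2⟩ := ((hc1 0).and (hc2 0)).exists
      apply hpne (ψ k)
      have h := hk1.trans (heq.trans hk2.symm)
      have h' : (xs (nJ (ψ k)) : ℤ → A) (0 + pp (ψ k))
          = (xs' (nJ (ψ k)) : ℤ → A) (0 + pp (ψ k)) := h
      simpa using h'
    have hφz : φ z = φ z' := by
      have e1 : Filter.Tendsto (fun k => φ ((zs (ψ k)).1)) Filter.atTop (nhds (φ z)) :=
        (hφ.1.tendsto _).comp hten1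
      have e2 : Filter.Tendsto (fun k => φ ((zs (ψ k)).2)) Filter.atTop (nhds (φ z')) :=
        (hφ.1.tendsto _).comp hten2
      have eeq : (fun k => φ ((zs (ψ k)).1)) = fun k => φ ((zs (ψ k)).2) := by
        funext k
        show φ (Strans hX (pp (ψ k)) (xs (nJ (ψ k)))) = φ (Strans hX (pp (ψ k)) (xs' (nJ (ψ k))))
        rw [code_commute hX hY hφ, code_commute hX hY hφ, h2]
      rw [eeq] at e1
      exact tendsto_nhds_unique e1 e2
    have hzz : z = z' := hbc.2 z z' ⟨1, fun i hi => hzagr i (by omega)⟩ hφz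
    exact hz0 (by rw [hzz])

/-- Fibers are exactly the ranges of injective maps from `Fin d` into them. -/
lemma fiber_eq_range {φ : X → Y} {d : ℕ} (hd : ExactlyDToOne φ d) {y : Y}
    {g : Fin d → X} (hg : Function.Injective g) (hmem : ∀ i, φ (g i) = y) :
    Set.range g = φ ⁻¹' {y} := by
  have hsub : Set.range g ⊆ φ ⁻¹' {y} := by
    rintro x ⟨i, rfl⟩
    simp [hmem i]
  refine Set.eq_of_subset_of_ncard_le hsub ?_ (hd y).1
  have h1 : (Set.range g).ncard = d := by
    rw [← Nat.card_coe_set_eq, Nat.card_range_of_injective hg]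
    simp
  have h2 : (φ ⁻¹' {y}).ncard = d := by
    rw [← Nat.card_coe_set_eq]; exact (hd y).2
  rw [h1, h2]

/-- Local triviality for open d-to-one codes. -/
lemma local_triv (hX : IsSubshift X) {φ : X → Y} (hφ : IsCode φ) {d : ℕ}
    (hd : ExactlyDToOne φ d) (h1 : IsOpenMap φ) (y : Y) :
    ∃ V : Set Y, IsOpen V ∧ y ∈ V ∧ ∃ U : Fin d → Set X,
      (∀ i, IsClopen (U i)) ∧ (Pairwise (Function.onFun Disjoint U)) ∧
      (∀ y' ∈ V, (φ ⁻¹' {y'}) ⊆ ⋃ i, U i) ∧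
      (∀ y' ∈ V, ∀ i, ∃! x, x ∈ U i ∧ φ x = y') := by
  classical
  have hXcomp : CompactSpace X := isCompact_iff_compactSpace.mp hX.1.isCompact
  have hfin : (φ ⁻¹' {y}).Finite := (hd y).1
  haveI := hfin.to_subtype
  let e : (φ ⁻¹' {y} : Set X) ≃ Fin d := Finite.equivFinOfCardEq (hd y).2
  set p : Fin d → X := fun i => ↑(e.symm i) with hp
  have hpmem : ∀ i, φ (p i) = y := fun i => (e.symm i).2
  have hpinj : Function.Injective p := fun i j h =>
    e.symm.injective (Subtype.coe_injective h)
  have hsep : ∀ q : Fin d × Fin d, ∃ c : ℤ,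
      q.1 ≠ q.2 → (p q.1 : ℤ → A) c ≠ (p q.2 : ℤ → A) c := by
    rintro ⟨i, j⟩
    by_cases hij : i = j
    · exact ⟨0, fun h => absurd hij h⟩
    · have hne : (p i : ℤ → A) ≠ (p j : ℤ → A) := fun h => hij (hpinj (Subtype.ext h))
      obtain ⟨c, hc⟩ := Function.ne_iff.mp hne
      exact ⟨c, fun _ => hc⟩
  choose cc hcc using hsep
  set n : ℕ := Finset.univ.sup (fun q : Fin d × Fin d => (cc q).natAbs) with hn
  set U : Fin d → Set X := fun i => {x : X | agreeOn n (x : ℤ → A) (p i : ℤ → A)} with hU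
  have hUclopen : ∀ i, IsClopen (U i) := fun i => isClopen_cyl X _ n
  have hpU : ∀ i, p i ∈ U i := fun i => agreeOn.refl _ _
  have hUdisj : Pairwise (Function.onFun Disjoint U) := by
    intro i j hij
    rw [Function.onFun, Set.disjoint_left]
    intro x hxi hxj
    apply hcc (i, j) hij
    have habs : |cc (i, j)| ≤ (n : ℤ) := by
      rw [Int.abs_eq_natAbs]
      exact_mod_cast Finset.le_sup (f := fun q : Fin d × Fin d => (cc q).natAbs)
        (Finset.mem_univ (i, j))
    rw [← hxi _ habs]
    exact hxj _ habs
  set V : Set Y := (⋂ i, φ '' (U i)) ∩ (φ '' ((⋃ i, U i)ᶜ))ᶜ with hV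
  have hVopen : IsOpen V := by
    apply IsOpen.inter
    · exact isOpen_iInter_of_finite fun i => h1 _ (hUclopen i).isOpen
    · rw [isOpen_compl_iff]
      have hcl : IsClosed ((⋃ i, U i)ᶜ) :=
        (isOpen_iUnion fun i => (hUclopen i).isOpen).isClosed_compl
      exact (hcl.isCompact.image hφ.1).isClosed
  have hyV : y ∈ V := by
    constructor
    · exact Set.mem_iInter.mpr fun i => ⟨p i, hpU i, hpmem i⟩
    · rintro ⟨x, hxc, hxy⟩
      apply hxc
      have hxmem : x ∈ φ ⁻¹' {y} := hxy
      have hxp : x = p (e ⟨x, hxmem⟩) := by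
        simp only [hp, Equiv.symm_apply_apply]
      refine Set.mem_iUnion.mpr ⟨e ⟨x, hxmem⟩, ?_⟩
      exact fun c _ => congrFun (congrArg Subtype.val hxp) c
  refine ⟨V, hVopen, hyV, U, hUclopen, hUdisj, ?_, ?_⟩
  · intro y' hy' x hx
    by_contra hxc
    exact hy'.2 ⟨x, hxc, hx⟩
  · intro y' hy' i
    have hex : ∀ j, ∃ x, x ∈ U j ∧ φ x = y' := by
      intro j
      obtain ⟨x, hxU, hxy⟩ := Set.mem_iInter.mp hy'.1 j
      exact ⟨x, hxU, hxy⟩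
    choose q hqU hqy using hex
    have hqinj : Function.Injective q := by
      intro i' j' h
      by_contra hne
      have hmem : q i' ∈ U j' := by rw [h]; exact hqU j'
      exact Set.disjoint_left.mp (hUdisj hne) (hqU i') hmem
    have hrange := fiber_eq_range hd hqinj hqy
    refine ⟨q i, ⟨hqU i, hqy i⟩, ?_⟩
    rintro x ⟨hxU, hxy⟩
    have hxmem : x ∈ Set.range q := by
      rw [hrange]
      exact hxy
    obtain ⟨j, hj⟩ := hxmem
    have hji : j = i := by
      by_contra hne
      have hmem : x ∈ U j := by rw [← hj]; exact hqU j
      exact Set.disjoint_left.mp (hUdisj hne) hmem hxU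
    rw [← hj, hji]

lemma impl_1_3 (hX : IsSubshift X) (hY : IsSubshift Y) (φ : X → Y) (hφ : IsCode φ)
    (d : ℕ) (hd : ExactlyDToOne φ d) (h1 : IsOpenMap φ) :
    ∃ f : Fin d → (Y → X), (∀ i, Continuous (f i)) ∧ (∀ i y, φ (f i y) = y) ∧
      (∀ i j, i ≠ j → Disjoint (Set.range (f i)) (Set.range (f j))) ∧
      (⋃ i, Set.range (f i)) = Set.univ := by
  classical
  rcases Nat.eq_zero_or_pos d with hd0 | hdpos
  · subst hd0
    have hXe : IsEmpty X := by
      constructor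
      intro x
      have hcard := (hd (φ x)).2
      haveI := (hd (φ x)).1.to_subtype
      haveI : Nonempty (φ ⁻¹' {φ x} : Set X) := ⟨⟨x, rfl⟩⟩
      exact absurd hcard (Nat.card_ne_zero.mpr ⟨inferInstance, inferInstance⟩)
    refine ⟨Fin.elim0, fun i => i.elim0, fun i => i.elim0, fun i => i.elim0, ?_⟩
    rw [Set.iUnion_of_empty]
    exact (Set.univ_eq_empty_iff.mpr hXe).symm
  have hXcomp : CompactSpace X := isCompact_iff_compactSpace.mp hX.1.isCompact
  have hYcomp : CompactSpace Y := isCompact_iff_compactSpace.mp hY.1.isCompact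
  choose V hVopen hyV U hUclopen hUdisj hUfib hUuniq using local_triv hX hφ hd h1
  have hK : ∀ y : Y, ∃ K : Set Y, IsClopen K ∧ y ∈ K ∧ K ⊆ V y := by
    intro y
    obtain ⟨S, hS, hpre⟩ := isOpen_induced_iff.mp (hVopen y)
    have hyS : (y : ℤ → B) ∈ S := by
      have hmem : y ∈ Subtype.val ⁻¹' S := by rw [hpre]; exact hyV y
      exact hmem
    obtain ⟨m, hm⟩ := exists_cyl_subset hS hyS
    refine ⟨{y' : Y | agreeOn m (y' : ℤ → B) (y : ℤ → B)}, isClopen_cyl Y _ m,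
      agreeOn.refl _ _, ?_⟩
    intro y' hy'
    have hmem : y' ∈ Subtype.val ⁻¹' S := hm _ hy'
    rw [hpre] at hmem
    exact hmem
  choose K hKclopen hyK hKV using hK
  have hcov : (Set.univ : Set Y) ⊆ ⋃ y, K y := fun y _ => Set.mem_iUnion.mpr ⟨y, hyK y⟩
  obtain ⟨t, ht⟩ := isCompact_univ.elim_finite_subcover K (fun y => (hKclopen y).isOpen) hcov
  set l : List Y := t.toList with hl
  set m : ℕ := l.length with hm
  set KK : Fin m → Set Y := fun j => K (l.get j) with hKK
  have hcov' : ∀ y' : Y, ∃ j : Fin m, y' ∈ KK j := by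
    intro y'
    have hmem := ht (Set.mem_univ y')
    simp only [Set.mem_iUnion] at hmem
    obtain ⟨y, hyt, hy'K⟩ := hmem
    obtain ⟨j, hj⟩ := List.mem_iff_get.mp (Finset.mem_toList.mpr hyt)
    refine ⟨j, ?_⟩
    simp only [hKK]
    rw [hj]
    exact hy'K
  set W : Fin m → Set Y := fun j => KK j \ ⋃ j' ∈ {i : Fin m | i < j}, KK j' with hW
  have hWclopen : ∀ j, IsClopen (W j) := by
    intro j
    refine IsClopen.diff (hKclopen _) ⟨?_, ?_⟩
    · exact Set.Finite.isClosed_biUnion (Set.toFinite _) fun j' _ => (hKclopen _).isClosed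
    · exact isOpen_biUnion fun j' _ => (hKclopen _).isOpen
  have hWV : ∀ j, W j ⊆ V (l.get j) := fun j y' hy' => hKV _ hy'.1
  have hWdisj : ∀ j j', j ≠ j' → Disjoint (W j) (W j') := by
    intro j j' hne
    rcases lt_or_gt_of_ne hne with h | h
    · rw [Set.disjoint_left]
      intro y' hyj hyj'
      exact hyj'.2 (Set.mem_biUnion h hyj.1)
    · rw [Set.disjoint_left]
      intro y' hyj hyj'
      exact hyj.2 (Set.mem_biUnion h hyj'.1)
  have hWcov : ∀ y' : Y, ∃ j, y' ∈ W j := by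
    intro y'
    have hne : (Finset.univ.filter fun j : Fin m => y' ∈ KK j).Nonempty := by
      obtain ⟨j, hj⟩ := hcov' y'
      exact ⟨j, Finset.mem_filter.mpr ⟨Finset.mem_univ _, hj⟩⟩
    set j₀ := (Finset.univ.filter fun j : Fin m => y' ∈ KK j).min' hne with hj₀
    refine ⟨j₀,
      (Finset.mem_filter.mp ((Finset.univ.filter fun j : Fin m => y' ∈ KK j).min'_mem hne)).2, ?_⟩
    intro hmem
    simp only [Set.mem_iUnion, Set.mem_setOf_eq] at hmem
    obtain ⟨j', hj'lt, hj'K⟩ := hmem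
    have hle : j₀ ≤ j' := (Finset.univ.filter fun j : Fin m => y' ∈ KK j).min'_le j'
      (Finset.mem_filter.mpr ⟨Finset.mem_univ _, hj'K⟩)
    exact absurd hj'lt (not_lt.mpr hle)
  set R : Fin d → Set X := fun i => ⋃ j : Fin m, (U (l.get j) i ∩ φ ⁻¹' (W j)) with hR
  have hRclopen : ∀ i, IsClopen (R i) := by
    intro i
    constructor
    · exact isClosed_iUnion_of_finite fun j =>
        ((hUclopen _ i).isClosed.inter ((hWclopen j).isClosed.preimage hφ.1))
    · exact isOpen_iUnion fun j =>
        ((hUclopen _ i).isOpen.inter ((hWclopen j).isOpen.preimage hφ.1))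
  have hRinj : ∀ i, ∀ x x', x ∈ R i → x' ∈ R i → φ x = φ x' → x = x' := by
    intro i x x' hx hx' heq
    simp only [hR, Set.mem_iUnion, Set.mem_inter_iff, Set.mem_preimage] at hx hx'
    obtain ⟨j, hxU, hxW⟩ := hx
    obtain ⟨j', hx'U, hx'W⟩ := hx'
    have hjj' : j = j' := by
      by_contra hne
      have hmem : φ x ∈ W j' := by rw [heq]; exact hx'W
      exact Set.disjoint_left.mp (hWdisj _ _ hne) hxW hmem
    subst hjj'
    obtain ⟨z, -, hzuniq⟩ := hUuniq (l.get j) (φ x) (hWV j hxW) i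
    have e1 : x = z := hzuniq x ⟨hxU, rfl⟩
    have e2 : x' = z := hzuniq x' ⟨hx'U, heq.symm⟩
    rw [e1, e2]
  have hRsurj : ∀ i, ∀ y' : Y, ∃ x, x ∈ R i ∧ φ x = y' := by
    intro i y'
    obtain ⟨j, hj⟩ := hWcov y'
    obtain ⟨z, ⟨hzU, hzy⟩, -⟩ := hUuniq (l.get j) y' (hWV j hj) i
    refine ⟨z, ?_, hzy⟩
    simp only [hR, Set.mem_iUnion, Set.mem_inter_iff, Set.mem_preimage]
    exact ⟨j, hzU, by rw [hzy]; exact hj⟩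
  have hRcov : ∀ x : X, ∃ i, x ∈ R i := by
    intro x
    obtain ⟨j, hj⟩ := hWcov (φ x)
    have hfib := hUfib (l.get j) (φ x) (hWV j hj) (show x ∈ φ ⁻¹' {φ x} from rfl)
    simp only [Set.mem_iUnion] at hfib
    obtain ⟨i, hi⟩ := hfib
    refine ⟨i, ?_⟩
    simp only [hR, Set.mem_iUnion, Set.mem_inter_iff, Set.mem_preimage]
    exact ⟨j, hi, hj⟩
  have hRdisj : ∀ i i', i ≠ i' → Disjoint (R i) (R i') := by
    intro i i' hne
    rw [Set.disjoint_left]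
    intro x hxi hxi'
    simp only [hR, Set.mem_iUnion, Set.mem_inter_iff, Set.mem_preimage] at hxi hxi'
    obtain ⟨j, hxU, hxW⟩ := hxi
    obtain ⟨j', hx'U, hx'W⟩ := hxi'
    have hjj' : j = j' := by
      by_contra hjne
      exact Set.disjoint_left.mp (hWdisj _ _ hjne) hxW hx'W
    subst hjj'
    exact Set.disjoint_left.mp (hUdisj (l.get j) hne) hxU hx'U
  have hsec : ∀ i : Fin d, ∃ f : Y → X, Continuous f ∧ (∀ y', φ (f y') = y') ∧
      Set.range f = R i := by
    intro i
    haveI : CompactSpace (R i) := isCompact_iff_compactSpace.mp (hRclopen i).isClosed.isCompact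
    have hbij : Function.Bijective (fun z : R i => φ (z : X)) := by
      constructor
      · intro z z' hzz
        exact Subtype.ext (hRinj i (z : X) (z' : X) z.2 z'.2 hzz)
      · intro y'
        obtain ⟨x, hxR, hxy⟩ := hRsurj i y'
        exact ⟨⟨x, hxR⟩, hxy⟩
    let eqv : (R i : Set X) ≃ Y := Equiv.ofBijective _ hbij
    have hcont : Continuous (⇑eqv) := hφ.1.comp continuous_subtype_val
    let ho : (R i : Set X) ≃ₜ Y := hcont.homeoOfEquivCompactToT2
    refine ⟨fun y' => ↑(ho.symm y'), continuous_subtype_val.comp ho.symm.continuous, ?_, ?_⟩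
    · intro y'
      exact ho.apply_symm_apply y'
    · ext x
      constructor
      · rintro ⟨y', rfl⟩
        exact (ho.symm y').2
      · intro hx
        refine ⟨ho ⟨x, hx⟩, ?_⟩
        show ((ho.symm (ho ⟨x, hx⟩) : (R i : Set X)) : X) = x
        rw [ho.symm_apply_apply]
  choose f hfc hfs hfr using hsec
  refine ⟨f, hfc, hfs, ?_, ?_⟩
  · intro i j hij
    rw [hfr, hfr]
    exact hRdisj i j hij
  · apply Set.eq_univ_of_forall
    intro x
    obtain ⟨i, hi⟩ := hRcov x
    refine Set.mem_iUnion.mpr ⟨i, ?_⟩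
    rw [hfr]
    exact hi

lemma impl_3_2 (hX : IsSubshift X) (hY : IsSubshift Y) (φ : X → Y) (hφ : IsCode φ)
    (d : ℕ)
    (h3 : ∃ f : Fin d → (Y → X), (∀ i, Continuous (f i)) ∧ (∀ i y, φ (f i y) = y) ∧
      (∀ i j, i ≠ j → Disjoint (Set.range (f i)) (Set.range (f j))) ∧
      (⋃ i, Set.range (f i)) = Set.univ) :
    BiClosing φ := by
  obtain ⟨f, hfc, hfs, hdisj, hcov⟩ := h3
  have hgex : ∀ x : X, ∃ i : Fin d, x ∈ Set.range (f i) := by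
    intro x
    have hx : x ∈ ⋃ i, Set.range (f i) := hcov ▸ Set.mem_univ x
    exact Set.mem_iUnion.mp hx
  choose g hg using hgex
  have hfix : ∀ x : X, f (g x) (φ x) = x := by
    intro x
    obtain ⟨y, hy⟩ := hg x
    have hφx : φ x = y := by rw [← hfs (g x) y, hy]
    rw [hφx, hy]
  have hYcomp : CompactSpace Y := isCompact_iff_compactSpace.mp hY.1.isCompact
  have hrclosed : ∀ i, IsClosed (Set.range (f i)) := fun i =>
    (isCompact_range (hfc i)).isClosed
  have hgu : ∀ x j, x ∈ Set.range (f j) → g x = j := by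
    intro x j hxj
    by_contra hne
    exact Set.disjoint_left.mp (hdisj _ _ hne) (hg x) hxj
  have hropen : ∀ i, IsOpen (Set.range (f i)) := by
    intro i
    have he : (Set.range (f i))ᶜ = ⋃ j ∈ ({i}ᶜ : Set (Fin d)), Set.range (f j) := by
      ext x
      simp only [Set.mem_compl_iff, Set.mem_iUnion, Set.mem_singleton_iff]
      constructor
      · intro hx
        exact ⟨g x, fun hgi => hx (hgi ▸ hg x), hg x⟩
      · rintro ⟨j, hji, hxj⟩ hxi
        exact Set.disjoint_left.mp (hdisj j i hji) hxj hxi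
    have hcl : IsClosed ((Set.range (f i))ᶜ) := by
      rw [he]
      exact Set.Finite.isClosed_biUnion (Set.toFinite _) fun j _ => hrclosed j
    exact isClosed_compl_iff.mp hcl
  have hgc : Continuous g := by
    rw [continuous_discrete_rng]
    intro j
    have he : g ⁻¹' {j} = Set.range (f j) := by
      ext x
      simp only [Set.mem_preimage, Set.mem_singleton_iff]
      exact ⟨fun h => h ▸ hg x, hgu x j⟩
    rw [he]
    exact hropen j
  obtain ⟨n, hn⟩ := exists_window hX.1 g hgc
  have main : ∀ (k : ℤ) (x x' : X),
      (∀ i : ℤ, |i| ≤ (n : ℤ) → (x : ℤ → A) (i + k) = (x' : ℤ → A) (i + k)) →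
      φ x = φ x' → x = x' := by
    intro k x x' hagr hφeq
    have hagr' : agreeOn n (Strans hX k x : ℤ → A) (Strans hX k x' : ℤ → A) := fun i hi => hagr i hi
    have hgeq : g (Strans hX k x) = g (Strans hX k x') := hn _ _ hagr'
    have hφk : φ (Strans hX k x) = φ (Strans hX k x') := by
      rw [code_commute hX hY hφ, code_commute hX hY hφ, hφeq]
    have heq : Strans hX k x = Strans hX k x' := by
      have e1 := hfix (Strans hX k x)
      have e2 := hfix (Strans hX k x')
      rw [← e1, ← e2, hgeq, hφk]
    exact Strans_injective hX k heq
  constructor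
  · rintro x x' ⟨N, hN⟩ hφeq
    refine main (N - (n : ℤ)) x x' (fun i hi => hN _ ?_) hφeq
    have := (abs_le.mp hi).2
    omega
  · rintro x x' ⟨N, hN⟩ hφeq
    refine main (N + (n : ℤ)) x x' (fun i hi => hN _ ?_) hφeq
    have := (abs_le.mp hi).1
    omega

lemma impl_2_1 (hX : IsSubshift X) (hY : IsSubshift Y) (φ : X → Y) (hφ : IsCode φ)
    (d : ℕ) (hd : ExactlyDToOne φ d) (h2 : BiClosing φ) :
    IsOpenMap φ := by
  classical
  have hXcomp : CompactSpace X := isCompact_iff_compactSpace.mp hX.1.isCompact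
  have hYcomp : CompactSpace Y := isCompact_iff_compactSpace.mp hY.1.isCompact
  obtain ⟨n₀, hn₀⟩ := uniform_closing hX hY hφ h2
  intro Uo hUo
  rw [isOpen_iff_forall_mem_open]
  rintro yy ⟨x₀, hx₀U, rfl⟩
  obtain ⟨S, hS, hpre⟩ := isOpen_induced_iff.mp hUo
  have hx₀S : (x₀ : ℤ → A) ∈ S := by
    have hmem : x₀ ∈ Subtype.val ⁻¹' S := by rw [hpre]; exact hx₀U
    exact hmem
  obtain ⟨n₁, hn₁⟩ := exists_cyl_subset hS hx₀S
  set n : ℕ := max n₀ n₁ with hn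
  have hcylU : ∀ x : X, agreeOn n (x : ℤ → A) (x₀ : ℤ → A) → x ∈ Uo := by
    intro x hx
    have hxS : (x : ℤ → A) ∈ S := by
      refine hn₁ _ (fun i hi => hx i (le_trans hi ?_))
      exact_mod_cast le_max_right n₀ n₁
    have hmem : x ∈ Subtype.val ⁻¹' S := hxS
    rw [hpre] at hmem
    exact hmem
  have hn₀n : ∀ x x' : X, agreeOn n (x : ℤ → A) (x' : ℤ → A) → φ x = φ x' → x = x' := by
    intro x x' hagr heq
    refine hn₀ x x' (fun i hi => hagr i (le_trans hi ?_)) heq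
    exact_mod_cast le_max_left n₀ n₁
  have key : ∃ m : ℕ, ∀ y : Y, agreeOn m (y : ℤ → B) ((φ x₀ : Y) : ℤ → B) →
      ∃ x : X, φ x = y ∧ agreeOn n (x : ℤ → A) (x₀ : ℤ → A) := by
    by_contra hcon
    push_neg at hcon
    choose ys hys1 hys2 using hcon
    have henum : ∀ m : ℕ, ∃ g : Fin d → X, Function.Injective g ∧ ∀ i, φ (g i) = ys m := by
      intro m
      haveI := (hd (ys m)).1.to_subtype
      let e : (φ ⁻¹' {ys m} : Set X) ≃ Fin d := Finite.equivFinOfCardEq (hd (ys m)).2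
      refine ⟨fun i => ↑(e.symm i), fun i j h => e.symm.injective (Subtype.coe_injective h),
        fun i => (e.symm i).2⟩
    choose gs hginj hgmem using henum
    obtain ⟨w, -, ψ, hψ, hten⟩ := isCompact_univ.tendsto_subseq
      (x := gs) (fun m => Set.mem_univ (gs m))
    have hteni : ∀ i : Fin d, Filter.Tendsto (fun k => gs (ψ k) i) Filter.atTop (nhds (w i)) :=
      fun i => ((continuous_apply i).tendsto _).comp hten
    have hyten : Filter.Tendsto (fun k => ys (ψ k)) Filter.atTop (nhds (φ x₀)) := by
      rw [tendsto_subtype_rng, tendsto_pi_nhds]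
      intro i
      rw [nhds_discrete B, tendsto_pure]
      filter_upwards [Filter.eventually_ge_atTop i.natAbs] with k hk
      refine hys1 (ψ k) i ?_
      rw [Int.abs_eq_natAbs]
      have e3 : k ≤ ψ k := hψ.le_apply
      exact_mod_cast le_trans hk e3
    have hwfib : ∀ i, φ (w i) = φ x₀ := by
      intro i
      have e1 : Filter.Tendsto (fun k => φ (gs (ψ k) i)) Filter.atTop (nhds (φ (w i))) :=
        (hφ.1.tendsto _).comp (hteni i)
      have e2 : (fun k => φ (gs (ψ k) i)) = fun k => ys (ψ k) :=
        funext fun k => hgmem (ψ k) i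
      rw [e2] at e1
      exact tendsto_nhds_unique e1 hyten
    have hwinj : Function.Injective w := by
      intro i j hij
      by_contra hne
      have hei := eventually_agreeOn (tendsto_subtype_rng.mp (hteni i)) n
      have hej := eventually_agreeOn (tendsto_subtype_rng.mp (hteni j)) n
      obtain ⟨k, hki, hkj⟩ := (hei.and hej).exists
      have hagr : agreeOn n (gs (ψ k) i : ℤ → A) (gs (ψ k) j : ℤ → A) := by
        intro c hc
        rw [hki c hc, hkj c hc, hij]
      have heq : gs (ψ k) i = gs (ψ k) j :=
        hn₀n _ _ hagr (by rw [hgmem, hgmem])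
      exact hne (hginj (ψ k) heq)
    have hrange := fiber_eq_range hd hwinj hwfib
    have hx₀mem : x₀ ∈ Set.range w := by
      rw [hrange]
      exact rfl
    obtain ⟨i, hi⟩ := hx₀mem
    have hev := eventually_agreeOn (tendsto_subtype_rng.mp (hteni i)) n
    obtain ⟨k, hk⟩ := hev.exists
    refine hys2 (ψ k) (gs (ψ k) i) (hgmem (ψ k) i) ?_
    rw [← hi]
    exact hk
  obtain ⟨m, hm⟩ := key
  refine ⟨{y : Y | agreeOn m (y : ℤ → B) ((φ x₀ : Y) : ℤ → B)}, ?_,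
    (isClopen_cyl Y _ m).isOpen, agreeOn.refl _ _⟩
  intro y hy
  obtain ⟨x, hxy, hxagr⟩ := hm y hy
  exact ⟨x, hcylU x hxagr, hxy⟩

lemma impl_4_1 (φ : X → Y)
    (h4 : ∀ x : X, ∃ f : Y → X, Continuous f ∧ (∀ y, φ (f y) = y) ∧ x ∈ Set.range f) :
    IsOpenMap φ := by
  intro U hU
  rw [isOpen_iff_forall_mem_open]
  rintro y ⟨x, hxU, rfl⟩
  obtain ⟨f, hfc, hfs, ⟨y₀, hy₀⟩⟩ := h4 x
  refine ⟨f ⁻¹' U, fun y' hy' => ⟨f y', hy', hfs y'⟩, hU.preimage hfc, ?_⟩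
  show f (φ x) ∈ U
  have hh : φ x = y₀ := by rw [← hy₀, hfs]
  rw [hh, hy₀]; exact hxU

end DToOneMain

theorem d_to_one_tfae {A : Type*} {B : Type*} [Finite A] [TopologicalSpace A] [DiscreteTopology A]
    [Finite B] [TopologicalSpace B] [DiscreteTopology B]
    {X : Set (ℤ → A)} {Y : Set (ℤ → B)} (hX : IsSubshift X) (hY : IsSubshift Y)
    (φ : X → Y) (hφ : IsCode φ)
    (d : ℕ) (hd : ExactlyDToOne φ d) :
    List.TFAE [IsOpenMap φ,
      BiClosing φ,
      ∃ f : Fin d → (Y → X), (∀ i, Continuous (f i)) ∧ (∀ i y, φ (f i y) = y) ∧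
        (∀ i j, i ≠ j → Disjoint (Set.range (f i)) (Set.range (f j))) ∧
        (⋃ i, Set.range (f i)) = Set.univ,
      ∀ x : X, ∃ f : Y → X, Continuous f ∧ (∀ y, φ (f y) = y) ∧ x ∈ Set.range f] := by
  tfae_have 1 → 3 := impl_1_3 hX hY φ hφ d hd
  tfae_have 3 → 2 := impl_3_2 hX hY φ hφ d
  tfae_have 2 → 1 := impl_2_1 hX hY φ hφ d hd
  tfae_have 3 → 4 := by
    rintro ⟨f, hc, hs, -, hcov⟩ x
    have hx : x ∈ ⋃ i, Set.range (f i) := hcov ▸ Set.mem_univ x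
    obtain ⟨i, hi⟩ := Set.mem_iUnion.mp hx
    exact ⟨f i, hc i, hs i, hi⟩
  tfae_have 4 → 1 := impl_4_1 φ
  tfae_finish
end
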